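/- arXiv:1509.03092 — 6 statements merged into one kernel-verified Lean document; each statement's English description precedes it below -/
import Mathlib

section
/- Let G be a cubic (3-regular) simple graph of order n which has an S_{1,2}-decomposition, and let T be the set of vertices of G which occur only as pendant vertices (vertices of degree 1) in the copies of S_{1,2} of this decomposition. Then T is an independent set in G and |T| = n/4. -/
open SimpleGraph

variable {V : Type*}

/-- A (potential) copy of the double-star `S_{1,r-1}` in a graph on vertex set `V`.
`center` is the vertex of degree `r`, `mid` is the vertex of degree 2 (adjacent to `center`),
`pend` is the pendant neighbour of `mid`, and `leaf i` are the `r - 1` pendant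
neighbours of `center`.  For `r = 3` this is the double-star `S_{1,2}`. -/
structure DoubleStarCopy (V : Type*) (r : ℕ) where
  center : V
  mid : V
  pend : V
  leaf : Fin (r - 1) → V

namespace DoubleStarCopy

variable {r : ℕ}

/-- The list of vertices of the copy. -/
def vertList (t : DoubleStarCopy V r) : List V :=
  t.center :: t.mid :: t.pend :: List.ofFn t.leaf

/-- The vertex set of the copy. -/
def verts (t : DoubleStarCopy V r) : Set V := {v | v ∈ t.vertList}

/-- The pendant (degree-one) vertices of the copy. -/
def pendants (t : DoubleStarCopy V r) : Set V := insert t.pend (Set.range t.leaf)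

/-- The edge set of the copy. -/
def edges (t : DoubleStarCopy V r) : Set (Sym2 V) :=
  insert s(t.center, t.mid) (insert s(t.mid, t.pend)
    (Set.range fun i => s(t.center, t.leaf i)))

/-- `t` is a genuine copy of the double-star `S_{1,r-1}` inside `G`:
its vertices are pairwise distinct and all its edges are edges of `G`. -/
def IsCopyIn (G : SimpleGraph V) (t : DoubleStarCopy V r) : Prop :=
  t.vertList.Nodup ∧ t.edges ⊆ G.edgeSet

end DoubleStarCopy

/-- `𝒟` is an `S_{1,r-1}`-decomposition of `G`: every member of `𝒟` is a copy of the
double-star `S_{1,r-1}` in `G`, and every edge of `G` lies in exactly one member of `𝒟`. -/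
def IsDSDecompOf (G : SimpleGraph V) (r : ℕ) (𝒟 : Set (DoubleStarCopy V r)) : Prop :=
  (∀ t ∈ 𝒟, t.IsCopyIn G) ∧ ∀ e ∈ G.edgeSet, ∃! t, t ∈ 𝒟 ∧ e ∈ t.edges

/-- `G` has an `S_{1,r-1}`-decomposition. -/
def HasDSDecomp (G : SimpleGraph V) (r : ℕ) : Prop :=
  ∃ 𝒟 : Set (DoubleStarCopy V r), IsDSDecompOf G r 𝒟

/-- `G` is `(S_{1,r-1}, S)`-decomposable: it has an `S_{1,r-1}`-decomposition in which `S`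
is exactly the set of vertices occurring as the degree-`r` vertex of some copy. -/
def IsDSSDecomposable (G : SimpleGraph V) (r : ℕ) (S : Set V) : Prop :=
  ∃ 𝒟 : Set (DoubleStarCopy V r), IsDSDecompOf G r 𝒟 ∧ S = {v | ∃ t ∈ 𝒟, t.center = v}

/-- `S` is an independent set of `G`. -/
def IsIndepSetIn (G : SimpleGraph V) (S : Set V) : Prop :=
  ∀ ⦃u⦄, u ∈ S → ∀ ⦃v⦄, v ∈ S → ¬ G.Adj u v

/-- The independence number `α(G)`. -/
noncomputable def indepNumber (G : SimpleGraph V) : ℕ :=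
  sSup {k | ∃ S : Set V, IsIndepSetIn G S ∧ S.ncard = k}

/-- `D` is a dominating set of `G`. -/
def IsDomSet (G : SimpleGraph V) (D : Set V) : Prop :=
  ∀ v ∉ D, ∃ d ∈ D, G.Adj v d

/-- The domination number `γ(G)`. -/
noncomputable def domNumber (G : SimpleGraph V) : ℕ :=
  sInf {k | ∃ D : Set V, IsDomSet G D ∧ D.ncard = k}

/-- `N(X)`, the union of the neighbourhoods of the vertices of `X`. -/
def nbhd (G : SimpleGraph V) (X : Set V) : Set V := {v | ∃ x ∈ X, G.Adj x v}

/-- The degree of `v` in the graph `G ∖ S` (for `v ∉ S`). -/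
noncomputable def degIn (G : SimpleGraph V) (S : Set V) (v : V) : ℕ :=
  {w | w ∉ S ∧ G.Adj v w}.ncard

/-- The vertex `v` lies on a cycle of length `k` in `G`. -/
def InCycleOfLength (G : SimpleGraph V) (v : V) (k : ℕ) : Prop :=
  ∃ c : G.Walk v v, c.IsCycle ∧ c.length = k

/-- A graph is a cycle: it has a (genuine, simple) cycle passing through all of
its vertices and using all of its edges. -/
def IsCycleGraph {W : Type*} (H : SimpleGraph W) : Prop :=
  ∃ (v : W) (c : H.Walk v v), c.IsCycle ∧ (∀ x, x ∈ c.support) ∧ ∀ e ∈ H.edgeSet, e ∈ c.edges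

/-- A graph is a path: it has a simple path passing through all of its vertices and
using all of its edges. -/
def IsPathGraph {W : Type*} (H : SimpleGraph W) : Prop :=
  ∃ (u v : W) (p : H.Walk u v), p.IsPath ∧ (∀ x, x ∈ p.support) ∧ ∀ e ∈ H.edgeSet, e ∈ p.edges

/-- `S` is a cycling set of `G`: every connected component of `G ∖ S` is a cycle. -/
def IsCyclingSet (G : SimpleGraph V) (S : Set V) : Prop :=
  ∀ c : (G.induce Sᶜ).ConnectedComponent, IsCycleGraph ((G.induce Sᶜ).induce c.supp)

/-- `(A, B)` is a bipartition of `G`. -/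
def IsBipartitionOf (G : SimpleGraph V) (A B : Set V) : Prop :=
  A ∪ B = Set.univ ∧ Disjoint A B ∧ ∀ ⦃u v⦄, G.Adj u v → (u ∈ A ↔ v ∈ B)

/-- The edge set of the graph `G ∖ S`: edges of `G` avoiding `S`. -/
def removedEdges (G : SimpleGraph V) (S : Set V) : Set (Sym2 V) :=
  {e | e ∈ G.edgeSet ∧ ∀ v ∈ e, v ∉ S}

/-- Adjacency in the auxiliary bipartite graph `H = (S, L)`:
`s ∈ S` is adjacent to the vertex `u_e` corresponding to an edge `e` of `G ∖ S`
iff `G` has an edge with one end `s` whose other end lies on `e`. -/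
def auxAdj (G : SimpleGraph V) (s : V) (e : Sym2 V) : Prop :=
  ∃ w ∈ e, G.Adj s w

/-- The auxiliary bipartite graph `H = (S, L)` has a perfect matching: a bijection
between `S` and the edges of `G ∖ S` matching each `s ∈ S` with an `H`-neighbour. -/
def AuxHasPerfectMatching (G : SimpleGraph V) (S : Set V) : Prop :=
  ∃ m : ↥S ≃ ↥(removedEdges G S), ∀ s : ↥S, auxAdj G (s : V) ((m s : Sym2 V))

-- ## auxiliary lemmas

namespace DoubleStarCopy

lemma mem_verts_iff' (t : DoubleStarCopy V r) {v : V} :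
    v ∈ t.verts ↔ v = t.center ∨ v = t.mid ∨ v = t.pend ∨ ∃ i, v = t.leaf i := by
  simp [verts, vertList, List.mem_ofFn, eq_comm]

lemma mem_pendants_iff' (t : DoubleStarCopy V r) {v : V} :
    v ∈ t.pendants ↔ v = t.pend ∨ ∃ i, v = t.leaf i := by
  simp [pendants, eq_comm]

lemma mem_edges_iff' (t : DoubleStarCopy V r) {e : Sym2 V} :
    e ∈ t.edges ↔ e = s(t.center, t.mid) ∨ e = s(t.mid, t.pend) ∨
      ∃ i, e = s(t.center, t.leaf i) := by
  simp [edges, eq_comm]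

lemma nodup_facts' (t : DoubleStarCopy V r) (h : t.vertList.Nodup) :
    t.center ≠ t.mid ∧ t.center ≠ t.pend ∧ t.mid ≠ t.pend ∧
    (∀ i, t.center ≠ t.leaf i) ∧ (∀ i, t.mid ≠ t.leaf i) ∧
    (∀ i, t.pend ≠ t.leaf i) ∧ Function.Injective t.leaf := by
  simp [vertList, List.nodup_ofFn, List.mem_ofFn] at h
  obtain ⟨⟨h1,h2,h3⟩,⟨h4,h5⟩,h6,h7⟩ := h
  exact ⟨h1, h2, h4, fun i hi => h3 i hi.symm, fun i hi => h5 i hi.symm,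
    fun i hi => h6 i hi.symm, h7⟩

end DoubleStarCopy

instance instFiniteDSC {V : Type*} [Finite V] (r : ℕ) : Finite (DoubleStarCopy V r) :=
  Finite.of_injective (fun t => (t.center, t.mid, t.pend, t.leaf))
    (by rintro ⟨a,b,c,d⟩ ⟨a',b',c',d'⟩ h; simp_all)


/-- Let `G` be a cubic graph of order `n` with an `S_{1,2}`-decomposition
`𝒟`, and let `T` be the set of vertices occurring only as pendant vertices in the copies of
`S_{1,2}` of `𝒟`.  Then `T` is an independent set and `|T| = n/4`. -/
theorem statement3 {V : Type*} [Fintype V] (G : SimpleGraph V) [DecidableRel G.Adj]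
    (n : ℕ) (hn : Fintype.card V = n) (hcubic : G.IsRegularOfDegree 3)
    (𝒟 : Set (DoubleStarCopy V 3)) (hdec : IsDSDecompOf G 3 𝒟)
    (T : Set V)
    (hT : T = {v | (∃ t ∈ 𝒟, v ∈ t.verts) ∧ ∀ t ∈ 𝒟, v ∈ t.verts → v ∈ t.pendants}) :
    IsIndepSetIn G T ∧ 4 * T.ncard = n := by
  classical
  obtain ⟨hcopy, huniq⟩ := hdec
  set i0 : Fin (3-1) := ⟨0, by norm_num⟩ with hi0
  set i1 : Fin (3-1) := ⟨1, by norm_num⟩ with hi1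
  have hi01 : i0 ≠ i1 := by simp [hi0, hi1, Fin.ext_iff]
  -- center/mid are not pendants
  have hnp : ∀ t ∈ 𝒟, t.center ∉ t.pendants ∧ t.mid ∉ t.pendants := by
    intro t ht
    obtain ⟨h1, h2, h3, h4, h5, h6, h7⟩ := t.nodup_facts' (hcopy t ht).1
    rw [t.mem_pendants_iff', t.mem_pendants_iff']
    push_neg
    exact ⟨⟨h2, h4⟩, ⟨h3, h5⟩⟩
  -- independence
  have hindep : IsIndepSetIn G T := by
    intro u hu v hv hadj
    subst hT
    have he : s(u, v) ∈ G.edgeSet := hadj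
    obtain ⟨t, ⟨ht, hte⟩, -⟩ := huniq _ he
    have hverts : ∀ x, (x = t.center ∨ x = t.mid) → x ∈ t.verts := by
      intro x hx
      rw [t.mem_verts_iff']; tauto
    have key : ∀ x ∈ ({u, v} : Set V), (x = t.center ∨ x = t.mid) → False := by
      intro x hx hcm
      have hxT : x ∈ t.pendants := by
        rcases hx with rfl | rfl
        · exact hu.2 t ht (hverts _ hcm)
        · exact hv.2 t ht (hverts _ hcm)
      rcases hcm with rfl | rfl
      · exact (hnp t ht).1 hxT
      · exact (hnp t ht).2 hxT
    rw [t.mem_edges_iff'] at hte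
    rcases hte with h | h | ⟨i, h⟩ <;> rw [Sym2.eq_iff] at h
    · rcases h with ⟨h, -⟩ | ⟨h, -⟩
      · exact key u (by simp) (Or.inl h)
      · exact key u (by simp) (Or.inr h)
    · rcases h with ⟨h, -⟩ | ⟨-, h⟩
      · exact key u (by simp) (Or.inr h)
      · exact key v (by simp) (Or.inr h)
    · rcases h with ⟨h, -⟩ | ⟨-, h⟩
      · exact key u (by simp) (Or.inl h)
      · exact key v (by simp) (Or.inl h)
  refine ⟨hindep, ?_⟩
  -- edges of distinct copies are disjoint
  have hdisjE : ∀ t₁ ∈ 𝒟, ∀ t₂ ∈ 𝒟, t₁ ≠ t₂ → Disjoint t₁.edges t₂.edges := by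
    intro t₁ h₁ t₂ h₂ hne
    rw [Set.disjoint_left]
    intro e he₁ he₂
    obtain ⟨u, -, hu⟩ := huniq e ((hcopy t₁ h₁).2 he₁)
    exact hne ((hu t₁ ⟨h₁, he₁⟩).trans (hu t₂ ⟨h₂, he₂⟩).symm)
  -- any set of neighbours of v has at most 3 elements
  have keyle : ∀ (v : V) (N : Set V), N ⊆ G.neighborSet v → N.ncard ≤ 3 := by
    intro v N hN
    have h1 := Set.ncard_le_ncard hN (Set.toFinite _)
    have h2 : (G.neighborSet v).ncard = 3 := by
      rw [Set.ncard_eq_toFinset_card']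
      simpa [← neighborFinset_def] using hcubic v
    omega
  -- the "within-copy neighbour" machinery
  have main : ∀ t₁ ∈ 𝒟, ∀ t₂ ∈ 𝒟, t₁ ≠ t₂ → ∀ (v : V) (N₁ N₂ : Set V),
      N₁ ⊆ {w | s(v, w) ∈ t₁.edges} → N₂ ⊆ {w | s(v, w) ∈ t₂.edges} →
      N₁.ncard + N₂.ncard ≤ 3 := by
    intro t₁ h₁ t₂ h₂ hne v N₁ N₂ hN₁ hN₂
    have hdisj : Disjoint N₁ N₂ := by
      rw [Set.disjoint_left]
      intro w hw₁ hw₂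
      exact Set.disjoint_left.mp (hdisjE t₁ h₁ t₂ h₂ hne) (hN₁ hw₁) (hN₂ hw₂)
    have hsub : N₁ ∪ N₂ ⊆ G.neighborSet v := by
      rintro w (hw | hw)
      · exact (hcopy t₁ h₁).2 (hN₁ hw)
      · exact (hcopy t₂ h₂).2 (hN₂ hw)
    have := keyle v _ hsub
    rwa [Set.ncard_union_eq hdisj (Set.toFinite _) (Set.toFinite _)] at this
  -- 3 neighbours within a copy at the center
  have hcen : ∀ t ∈ 𝒟, ∃ N : Set V, N ⊆ {w | s(t.center, w) ∈ t.edges} ∧ N.ncard = 3 := by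
    intro t ht
    obtain ⟨h1, h2, h3, h4, h5, h6, h7⟩ := t.nodup_facts' (hcopy t ht).1
    refine ⟨{t.mid, t.leaf i0, t.leaf i1}, ?_, ?_⟩
    · rintro w (rfl | rfl | rfl) <;>
        simp only [Set.mem_setOf_eq, DoubleStarCopy.mem_edges_iff']
      · tauto
      · exact Or.inr (Or.inr ⟨i0, rfl⟩)
      · exact Or.inr (Or.inr ⟨i1, rfl⟩)
    · rw [Set.ncard_insert_of_notMem (by
          simp only [Set.mem_insert_iff, Set.mem_singleton_iff]
          push_neg
          exact ⟨h5 i0, h5 i1⟩),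
        Set.ncard_insert_of_notMem (by simpa using fun h => hi01 (h7 h)),
        Set.ncard_singleton]
  -- 2 neighbours within a copy at the mid
  have hmid : ∀ t ∈ 𝒟, ∃ N : Set V, N ⊆ {w | s(t.mid, w) ∈ t.edges} ∧ N.ncard = 2 := by
    intro t ht
    obtain ⟨h1, h2, h3, h4, h5, h6, h7⟩ := t.nodup_facts' (hcopy t ht).1
    refine ⟨{t.center, t.pend}, ?_, ?_⟩
    · rintro w (rfl | rfl) <;>
        simp only [Set.mem_setOf_eq, DoubleStarCopy.mem_edges_iff']
      · exact Or.inl (Sym2.eq_swap)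
      · tauto
    · rw [Set.ncard_insert_of_notMem (by simp [h2]), Set.ncard_singleton]
  -- injectivity of center and mid, disjointness
  have hAinj : Set.InjOn DoubleStarCopy.center 𝒟 := by
    intro t₁ h₁ t₂ h₂ hc
    by_contra hne
    obtain ⟨N₁, hs₁, hc₁⟩ := hcen t₁ h₁
    obtain ⟨N₂, hs₂, hc₂⟩ := hcen t₂ h₂
    rw [hc] at hs₁
    have := main t₁ h₁ t₂ h₂ hne t₂.center N₁ N₂ hs₁ hs₂
    omega
  have hBinj : Set.InjOn DoubleStarCopy.mid 𝒟 := by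
    intro t₁ h₁ t₂ h₂ hc
    by_contra hne
    obtain ⟨N₁, hs₁, hc₁⟩ := hmid t₁ h₁
    obtain ⟨N₂, hs₂, hc₂⟩ := hmid t₂ h₂
    rw [hc] at hs₁
    have := main t₁ h₁ t₂ h₂ hne t₂.mid N₁ N₂ hs₁ hs₂
    omega
  set A : Set V := DoubleStarCopy.center '' 𝒟 with hA
  set B : Set V := DoubleStarCopy.mid '' 𝒟 with hB
  have hABdisj : Disjoint A B := by
    rw [Set.disjoint_left]
    rintro v ⟨t₁, h₁, rfl⟩ ⟨t₂, h₂, hc⟩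
    by_cases hne : t₁ = t₂
    · subst hne
      exact (t₁.nodup_facts' (hcopy t₁ h₁).1).1 hc.symm
    · obtain ⟨N₁, hs₁, hc₁⟩ := hcen t₁ h₁
      obtain ⟨N₂, hs₂, hc₂⟩ := hmid t₂ h₂
      rw [hc] at hs₂
      have := main t₁ h₁ t₂ h₂ hne t₁.center N₁ N₂ hs₁ hs₂
      omega
  -- T is the complement of A ∪ B
  have hTc : T = (A ∪ B)ᶜ := by
    subst hT
    ext v
    simp only [Set.mem_setOf_eq, Set.mem_compl_iff, Set.mem_union, hA, hB, Set.mem_image]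
    constructor
    · rintro ⟨-, hall⟩
      rintro (⟨t, ht, rfl⟩ | ⟨t, ht, rfl⟩)
      · exact (hnp t ht).1 (hall t ht (by rw [t.mem_verts_iff']; tauto))
      · exact (hnp t ht).2 (hall t ht (by rw [t.mem_verts_iff']; tauto))
    · intro hv
      push_neg at hv
      obtain ⟨hvA, hvB⟩ := hv
      have hdeg : 0 < (G.neighborFinset v).card := by
        rw [card_neighborFinset_eq_degree, hcubic v]; omega
      obtain ⟨w, hw⟩ := Finset.card_pos.mp hdeg
      rw [mem_neighborFinset] at hw
      obtain ⟨t, ⟨ht, hte⟩, -⟩ := huniq s(v, w) hw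
      have hvt : v ∈ t.verts := by
        rw [t.mem_edges_iff'] at hte
        rw [t.mem_verts_iff']
        rcases hte with h | h | ⟨i, h⟩ <;> rw [Sym2.eq_iff] at h <;> tauto
      refine ⟨⟨t, ht, hvt⟩, ?_⟩
      intro t' ht' hvt'
      rw [t'.mem_verts_iff'] at hvt'
      rw [t'.mem_pendants_iff']
      rcases hvt' with rfl | rfl | h | h
      · exact absurd rfl (hvA t' ht')
      · exact absurd rfl (hvB t' ht')
      · tauto
      · tauto
  -- each copy has exactly 4 edges
  have hcard4 : ∀ t ∈ 𝒟, t.edges.ncard = 4 := by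
    intro t ht
    obtain ⟨h1, h2, h3, h4, h5, h6, h7⟩ := t.nodup_facts' (hcopy t ht).1
    have hll : t.leaf i0 ≠ t.leaf i1 := fun h => hi01 (h7 h)
    have hrange : (Set.range fun i => s(t.center, t.leaf i)) =
        {s(t.center, t.leaf i0), s(t.center, t.leaf i1)} := by
      ext e
      simp only [Set.mem_range, Set.mem_insert_iff, Set.mem_singleton_iff]
      constructor
      · rintro ⟨i, rfl⟩
        have hii : i = i0 ∨ i = i1 := by
          rcases i with ⟨iv, hiv⟩
          rw [Fin.ext_iff, Fin.ext_iff]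
          simp only [hi0, hi1]
          omega
        rcases hii with rfl | rfl <;> tauto
      · rintro (rfl | rfl) <;> exact ⟨_, rfl⟩
    rw [DoubleStarCopy.edges, hrange]
    rw [Set.ncard_insert_of_notMem (by
        simp [Sym2.eq_iff, h1, h2, h3, h4 i0, h4 i1, h5 i0, h5 i1, h6 i0, h6 i1,
          h1.symm, h2.symm, h3.symm, (h4 i0).symm, (h4 i1).symm, (h5 i0).symm,
          (h5 i1).symm, (h6 i0).symm, (h6 i1).symm, hll, hll.symm]),
      Set.ncard_insert_of_notMem (by
        simp [Sym2.eq_iff, h1, h2, h3, h4 i0, h4 i1, h5 i0, h5 i1, h6 i0, h6 i1,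
          h1.symm, h2.symm, h3.symm, (h4 i0).symm, (h4 i1).symm, (h5 i0).symm,
          (h5 i1).symm, (h6 i0).symm, (h6 i1).symm, hll, hll.symm]),
      Set.ncard_insert_of_notMem (by
        simp [Sym2.eq_iff, h1, h2, h3, h4 i0, h4 i1, h5 i0, h5 i1, h6 i0, h6 i1,
          h1.symm, h2.symm, h3.symm, (h4 i0).symm, (h4 i1).symm, (h5 i0).symm,
          (h5 i1).symm, (h6 i0).symm, (h6 i1).symm, hll, hll.symm]),
      Set.ncard_singleton]
  -- total number of edges
  have hfinD : 𝒟.Finite := Set.toFinite _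
  have hEdgeUnion : G.edgeFinset =
      hfinD.toFinset.biUnion (fun t => (Set.toFinite t.edges).toFinset) := by
    ext e
    simp only [mem_edgeFinset, Finset.mem_biUnion, Set.Finite.mem_toFinset]
    constructor
    · intro he
      obtain ⟨t, ⟨ht, hte⟩, -⟩ := huniq e he
      exact ⟨t, ht, hte⟩
    · rintro ⟨t, ht, hte⟩
      exact (hcopy t ht).2 hte
  have hEcard : G.edgeFinset.card = 4 * 𝒟.ncard := by
    rw [hEdgeUnion, Finset.card_biUnion (by
      intro t₁ h₁ t₂ h₂ hne
      simp only [Function.onFun]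
      rw [Finset.disjoint_left]
      intro e he₁ he₂
      rw [Set.Finite.mem_toFinset] at he₁ he₂
      exact Set.disjoint_left.mp
        (hdisjE t₁ (hfinD.mem_toFinset.mp h₁) t₂ (hfinD.mem_toFinset.mp h₂) hne) he₁ he₂)]
    have hc : ∀ t ∈ hfinD.toFinset, ((Set.toFinite t.edges).toFinset).card = 4 := by
      intro t ht
      rw [← Set.ncard_eq_toFinset_card]
      exact hcard4 t (hfinD.mem_toFinset.mp ht)
    rw [Finset.sum_congr rfl hc, Finset.sum_const, smul_eq_mul, mul_comm]
    congr 1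
    exact (Set.ncard_eq_toFinset_card 𝒟 hfinD).symm
  -- handshake
  have hhs : n * 3 = 2 * G.edgeFinset.card := by
    have h := G.sum_degrees_eq_twice_card_edges
    rw [show (∑ v, G.degree v) = ∑ _v : V, 3 from
      Finset.sum_congr rfl (fun v _ => hcubic v)] at h
    simpa [Finset.card_univ, hn] using h
  -- vertex counts
  have hAcard : A.ncard = 𝒟.ncard := Set.ncard_image_of_injOn hAinj
  have hBcard : B.ncard = 𝒟.ncard := Set.ncard_image_of_injOn hBinj
  have hABcard : (A ∪ B).ncard = A.ncard + B.ncard :=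
    Set.ncard_union_eq hABdisj (Set.toFinite _) (Set.toFinite _)
  have hsplit : (A ∪ B).ncard + T.ncard = n := by
    rw [hTc, Set.ncard_add_ncard_compl, Nat.card_eq_fintype_card, hn]
  omega
end

section
/- Let G be a cubic (3-regular) bipartite simple graph of order n with bipartition (A, B), and suppose 8 divides n. Then the domination number of G satisfies γ(G) = n/4 if and only if there exists a subset S ⊆ A of size 3n/8 such that G is both (S_{1,2}, S)-decomposable and (S_{1,2}, N(A∖S))-decomposable. -/
open SimpleGraph

variable {V : Type*}

namespace S8Aux
set_option linter.unusedSectionVars false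
open DoubleStarCopy
open scoped Classical

variable {V : Type*}

lemma edges_eq3 (t : DoubleStarCopy V 3) :
    t.edges = {s(t.center, t.mid), s(t.mid, t.pend), s(t.center, t.leaf 0), s(t.center, t.leaf 1)} := by
  unfold DoubleStarCopy.edges
  ext e
  simp only [Set.mem_insert_iff, Set.mem_range, Set.mem_setOf_eq]
  constructor
  · rintro (h|h|⟨i,rfl⟩)
    · tauto
    · tauto
    · fin_cases i
      · tauto
      · tauto
  · rintro (h|h|h|h)
    · tauto
    · tauto
    · exact Or.inr (Or.inr ⟨0, h.symm⟩)
    · exact Or.inr (Or.inr ⟨1, h.symm⟩)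

lemma vertList_eq3 (t : DoubleStarCopy V 3) :
    t.vertList = [t.center, t.mid, t.pend, t.leaf 0, t.leaf 1] := by
  simp [vertList, List.ofFn_succ]

lemma nodup_facts {t : DoubleStarCopy V 3} (h : t.vertList.Nodup) :
    t.center ≠ t.mid ∧ t.center ≠ t.pend ∧ t.center ≠ t.leaf 0 ∧ t.center ≠ t.leaf 1 ∧
    t.mid ≠ t.pend ∧ t.mid ≠ t.leaf 0 ∧ t.mid ≠ t.leaf 1 ∧
    t.pend ≠ t.leaf 0 ∧ t.pend ≠ t.leaf 1 ∧ t.leaf 0 ≠ t.leaf 1 := by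
  rw [vertList_eq3] at h
  simp only [List.nodup_cons, List.mem_cons, List.mem_singleton, List.nodup_nil,
    List.not_mem_nil, not_or, List.mem_insert_iff] at h
  refine ⟨?_,?_,?_,?_,?_,?_,?_,?_,?_,?_⟩ <;> tauto

lemma adj_of_copy {G : SimpleGraph V} {t : DoubleStarCopy V 3} (h : t.IsCopyIn G) :
    G.Adj t.center t.mid ∧ G.Adj t.mid t.pend ∧ G.Adj t.center (t.leaf 0) ∧
      G.Adj t.center (t.leaf 1) := by
  have h2 := h.2
  rw [edges_eq3] at h2
  refine ⟨?_, ?_, ?_, ?_⟩ <;> rw [← SimpleGraph.mem_edgeSet] <;> apply h2 <;> simp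

section Counting
variable [Fintype V] {G : SimpleGraph V} [DecidableRel G.Adj]

lemma nbr_eq {t : DoubleStarCopy V 3} (hcubic : G.IsRegularOfDegree 3)
    (h : t.IsCopyIn G) : G.neighborFinset t.center = {t.mid, t.leaf 0, t.leaf 1} := by
  obtain ⟨hcm, hmp, hl0, hl1⟩ := adj_of_copy h
  obtain ⟨_,_,_,_,_,h6,h7,_,_,h10⟩ := nodup_facts h.1
  symm
  apply Finset.eq_of_subset_of_card_le
  · intro x hx
    simp only [Finset.mem_insert, Finset.mem_singleton] at hx
    rcases hx with rfl|rfl|rfl <;> simp [SimpleGraph.mem_neighborFinset, hcm, hl0, hl1]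
  · have hc : (G.neighborFinset t.center).card = 3 := hcubic t.center
    have h3 : ({t.mid, t.leaf 0, t.leaf 1} : Finset V).card = 3 := by
      rw [Finset.card_insert_of_notMem (by simp [h6, h7]),
        Finset.card_insert_of_notMem (by simp [h10]), Finset.card_singleton]
    rw [hc, h3]

lemma edge_at_center {t : DoubleStarCopy V 3} (hcubic : G.IsRegularOfDegree 3)
    (h : t.IsCopyIn G) {e : Sym2 V} (he : e ∈ G.edgeSet) (hce : t.center ∈ e) :
    e ∈ t.edges := by
  have key : ∀ w, G.Adj t.center w → s(t.center, w) ∈ t.edges := by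
    intro w hw
    have hm : w ∈ G.neighborFinset t.center := by
      simpa [SimpleGraph.mem_neighborFinset] using hw
    rw [nbr_eq hcubic h] at hm
    simp only [Finset.mem_insert, Finset.mem_singleton] at hm
    rw [edges_eq3]
    rcases hm with rfl|rfl|rfl <;> simp
  induction e with
  | _ u v =>
    rw [SimpleGraph.mem_edgeSet] at he
    rw [Sym2.mem_iff] at hce
    rcases hce with rfl|rfl
    · exact key v he
    · have := key u he.symm
      rwa [Sym2.eq_swap] at this

lemma center_inj {𝒟 : Set (DoubleStarCopy V 3)} (hD : IsDSDecompOf G 3 𝒟)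
    (hcubic : G.IsRegularOfDegree 3) {t1 t2 : DoubleStarCopy V 3}
    (h1 : t1 ∈ 𝒟) (h2 : t2 ∈ 𝒟) (hc : t1.center = t2.center) : t1 = t2 := by
  have hcopy1 := hD.1 t1 h1
  have hcopy2 := hD.1 t2 h2
  have he : s(t2.center, t2.mid) ∈ G.edgeSet := hcopy2.2 (by rw [edges_eq3]; simp)
  have he1 : s(t2.center, t2.mid) ∈ t1.edges :=
    edge_at_center hcubic hcopy1 he (by rw [← hc]; simp)
  have he2 : s(t2.center, t2.mid) ∈ t2.edges := by rw [edges_eq3]; simp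
  obtain ⟨t, ht, hu⟩ := hD.2 _ he
  rw [hu t1 ⟨h1, he1⟩, hu t2 ⟨h2, he2⟩]

/-- The edge finset of a copy. -/
noncomputable def efin (t : DoubleStarCopy V 3) : Finset (Sym2 V) :=
  {s(t.center, t.mid), s(t.mid, t.pend), s(t.center, t.leaf 0), s(t.center, t.leaf 1)}

lemma mem_efin {t : DoubleStarCopy V 3} {e : Sym2 V} : e ∈ efin t ↔ e ∈ t.edges := by
  rw [edges_eq3]
  simp [efin]

lemma card_efin {t : DoubleStarCopy V 3} (h : t.vertList.Nodup) : (efin t).card = 4 := by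
  obtain ⟨h1,h2,h3,h4,h5,h6,h7,h8,h9,h10⟩ := nodup_facts h
  unfold efin
  rw [Finset.card_insert_of_notMem (by simp [Sym2.eq_iff]; tauto),
    Finset.card_insert_of_notMem (by simp [Sym2.eq_iff]; tauto),
    Finset.card_insert_of_notMem (by simp [Sym2.eq_iff]; tauto),
    Finset.card_singleton]

instance : Finite (DoubleStarCopy V 3) :=
  Finite.of_injective (fun t => (t.center, t.mid, t.pend, t.leaf))
    (by intro a b h; cases a; cases b; simpa [DoubleStarCopy.mk.injEq] using h)

lemma card_centers {𝒟 : Set (DoubleStarCopy V 3)} (hD : IsDSDecompOf G 3 𝒟)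
    (hcubic : G.IsRegularOfDegree 3) {C : Set V}
    (hC : C = {v | ∃ t ∈ 𝒟, t.center = v}) :
    8 * C.ncard = 3 * Fintype.card V := by
  have hfin : 𝒟.Finite := Set.toFinite 𝒟
  set Dfin := hfin.toFinset with hDfin
  have hmemD : ∀ t, t ∈ Dfin ↔ t ∈ 𝒟 := fun t => hfin.mem_toFinset
  have hE : G.edgeFinset = Dfin.biUnion efin := by
    ext e
    simp only [SimpleGraph.mem_edgeFinset, Finset.mem_biUnion]
    constructor
    · intro he
      obtain ⟨t, ⟨ht, hte⟩, _⟩ := hD.2 e he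
      exact ⟨t, (hmemD t).2 ht, mem_efin.2 hte⟩
    · rintro ⟨t, ht, hte⟩
      exact (hD.1 t ((hmemD t).1 ht)).2 (mem_efin.1 hte)
  have hdisj : ∀ t1 ∈ Dfin, ∀ t2 ∈ Dfin, t1 ≠ t2 → Disjoint (efin t1) (efin t2) := by
    intro t1 ht1 t2 ht2 hne
    rw [Finset.disjoint_left]
    intro e he1 he2
    have h1 : t1 ∈ 𝒟 := (hmemD t1).1 ht1
    have h2 : t2 ∈ 𝒟 := (hmemD t2).1 ht2
    have heG : e ∈ G.edgeSet := (hD.1 t1 h1).2 (mem_efin.1 he1)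
    obtain ⟨t, ht, hu⟩ := hD.2 e heG
    exact hne ((hu t1 ⟨h1, mem_efin.1 he1⟩).trans (hu t2 ⟨h2, mem_efin.1 he2⟩).symm)
  have hcard : G.edgeFinset.card = 4 * Dfin.card := by
    rw [hE, Finset.card_biUnion hdisj]
    rw [Finset.sum_congr rfl (fun t ht => card_efin (hD.1 t ((hmemD t).1 ht)).1)]
    rw [Finset.sum_const, smul_eq_mul, mul_comm]
  have hsum : 3 * Fintype.card V = 2 * G.edgeFinset.card := by
    rw [← SimpleGraph.sum_degrees_eq_twice_card_edges]
    rw [Finset.sum_congr rfl (fun v _ => hcubic v), Finset.sum_const, smul_eq_mul,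
      Finset.card_univ, mul_comm]
  have hCcard : C.ncard = Dfin.card := by
    have : C = ↑(Dfin.image DoubleStarCopy.center) := by
      rw [hC]
      ext v
      simp only [Finset.coe_image, Set.mem_image, Finset.mem_coe, Set.mem_setOf_eq, hmemD]
    rw [this, Set.ncard_coe_finset]
    apply Finset.card_image_of_injOn
    intro t1 ht1 t2 ht2 hc
    exact center_inj hD hcubic ((hmemD t1).1 ht1) ((hmemD t2).1 ht2) hc
  omega

end Counting
lemma nbr_card {G : SimpleGraph V} [Fintype V] [DecidableRel G.Adj]
    (hcubic : G.IsRegularOfDegree 3) (v : V) : (G.neighborFinset v).card = 3 := hcubic v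

section Bip
variable {G : SimpleGraph V} {A B : Set V}

lemma mem_B_of_adj (h : IsBipartitionOf G A B) {u v : V} (huv : G.Adj u v) (hu : u ∈ A) :
    v ∈ B := (h.2.2 huv).1 hu

lemma mem_A_of_adj (h : IsBipartitionOf G A B) {u v : V} (huv : G.Adj u v) (hu : u ∈ B) :
    v ∈ A := by
  by_contra hv
  have hvB : v ∈ B := by
    have hm : v ∈ A ∪ B := h.1 ▸ Set.mem_univ v
    rcases (Set.mem_union _ _ _).1 hm with h' | h'
    · exact absurd h' hv
    · exact h'
  exact Set.disjoint_left.mp h.2.1 ((h.2.2 huv).2 hvB) hu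

lemma not_adj_A (h : IsBipartitionOf G A B) {u v : V} (hu : u ∈ A) (hv : v ∈ A) :
    ¬ G.Adj u v := fun ha => Set.disjoint_left.mp h.2.1 hv (mem_B_of_adj h ha hu)

lemma bip_symm (h : IsBipartitionOf G A B) : IsBipartitionOf G B A := by
  refine ⟨by rw [Set.union_comm]; exact h.1, h.2.1.symm, fun u v huv => ?_⟩
  exact ⟨fun hu => mem_A_of_adj h huv hu, fun hv => mem_B_of_adj h huv.symm hv⟩

section Fin
variable [Fintype V] [DecidableRel G.Adj]

lemma ncard_bip_eq (hcubic : G.IsRegularOfDegree 3) (h : IsBipartitionOf G A B) :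
    A.ncard = B.ncard := by
  classical
  have key : ∀ (X Y : Set V), IsBipartitionOf G X Y →
      3 * X.toFinset.card =
        (Finset.univ.filter (fun p : V × V => p.1 ∈ X ∧ G.Adj p.1 p.2)).card := by
    intro X Y hXY
    set P := Finset.univ.filter (fun p : V × V => p.1 ∈ X ∧ G.Adj p.1 p.2) with hP
    have hmap : ∀ p ∈ P, p.1 ∈ X.toFinset := by
      intro p hp
      simp only [hP, Finset.mem_filter] at hp
      exact Set.mem_toFinset.2 hp.2.1
    rw [Finset.card_eq_sum_card_fiberwise hmap]
    have fib : ∀ a ∈ X.toFinset, (P.filter (fun p => p.1 = a)).card = 3 := by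
      intro a ha
      rw [← hcubic a]
      apply Finset.card_bij (fun p _ => p.2)
      · intro p hp
        simp only [hP, Finset.mem_filter, Finset.mem_univ, true_and] at hp
        obtain ⟨⟨_, hadj⟩, h1⟩ := hp
        rw [SimpleGraph.mem_neighborFinset, ← h1]
        exact hadj
      · intro p hp q hq hpq
        simp only [hP, Finset.mem_filter] at hp hq
        exact Prod.ext (hp.2.trans hq.2.symm) hpq
      · intro w hw
        rw [SimpleGraph.mem_neighborFinset] at hw
        refine ⟨(a, w), Finset.mem_filter.2 ⟨Finset.mem_filter.2
          ⟨Finset.mem_univ _, Set.mem_toFinset.1 ha, hw⟩, rfl⟩, rfl⟩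
    rw [Finset.sum_congr rfl fib, Finset.sum_const, smul_eq_mul, mul_comm]
  have hAB := key A B h
  have hBA := key B A (bip_symm h)
  have swap : (Finset.univ.filter (fun p : V × V => p.1 ∈ A ∧ G.Adj p.1 p.2)).card =
      (Finset.univ.filter (fun p : V × V => p.1 ∈ B ∧ G.Adj p.1 p.2)).card := by
    apply Finset.card_bij (fun p _ => (p.2, p.1))
    · intro p hp
      simp only [Finset.mem_filter, Finset.mem_univ, true_and] at hp ⊢
      exact ⟨mem_B_of_adj h hp.2 hp.1, hp.2.symm⟩
    · intro p hp q hq hpq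
      simp only [Prod.mk.injEq] at hpq
      exact Prod.ext hpq.2 hpq.1
    · intro q hq
      simp only [Finset.mem_filter, Finset.mem_univ, true_and] at hq ⊢
      exact ⟨(q.2, q.1), ⟨mem_A_of_adj h hq.2 hq.1, hq.2.symm⟩, rfl⟩
  rw [Set.ncard_eq_toFinset_card', Set.ncard_eq_toFinset_card']
  omega

lemma ncard_bip_add (h : IsBipartitionOf G A B) :
    A.ncard + B.ncard = Fintype.card V := by
  rw [← Set.ncard_union_eq h.2.1 (Set.toFinite A) (Set.toFinite B), h.1, Set.ncard_univ, Nat.card_eq_fintype_card]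

end Fin
end Bip

section Dom
variable {G : SimpleGraph V}

lemma domSet_univ : IsDomSet G Set.univ := fun v hv => absurd (Set.mem_univ v) hv

lemma exists_min_domSet (G : SimpleGraph V) :
    ∃ D : Set V, IsDomSet G D ∧ D.ncard = domNumber G := by
  have hne : {k | ∃ D : Set V, IsDomSet G D ∧ D.ncard = k}.Nonempty :=
    ⟨Set.univ.ncard, Set.univ, domSet_univ, rfl⟩
  obtain ⟨D, hD, hcard⟩ := Nat.sInf_mem hne
  exact ⟨D, hD, hcard⟩

lemma domNumber_le_of {D : Set V} (hdom : IsDomSet G D) : domNumber G ≤ D.ncard :=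
  Nat.sInf_le ⟨D, hdom, rfl⟩

variable [Fintype V] [DecidableRel G.Adj]

lemma card_le_of_domSet (hcubic : G.IsRegularOfDegree 3) {D : Set V}
    (hdom : IsDomSet G D) : Fintype.card V ≤ 4 * D.ncard := by
  classical
  have cover : (Finset.univ : Finset V) ⊆
      D.toFinset.biUnion (fun d => insert d (G.neighborFinset d)) := by
    intro v _
    by_cases hv : v ∈ D
    · exact Finset.mem_biUnion.2 ⟨v, Set.mem_toFinset.2 hv, Finset.mem_insert_self _ _⟩
    · obtain ⟨d, hd, hadj⟩ := hdom v hv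
      refine Finset.mem_biUnion.2 ⟨d, Set.mem_toFinset.2 hd, Finset.mem_insert.2 (Or.inr ?_)⟩
      rw [SimpleGraph.mem_neighborFinset]
      exact hadj.symm
  calc Fintype.card V = (Finset.univ : Finset V).card := Finset.card_univ.symm
    _ ≤ (D.toFinset.biUnion (fun d => insert d (G.neighborFinset d))).card :=
        Finset.card_le_card cover
    _ ≤ ∑ d ∈ D.toFinset, (insert d (G.neighborFinset d)).card := Finset.card_biUnion_le
    _ ≤ ∑ _d ∈ D.toFinset, 4 := Finset.sum_le_sum (fun d _ =>
        le_trans (Finset.card_insert_le _ _) (by rw [nbr_card hcubic d]))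
    _ = 4 * D.ncard := by
        rw [Finset.sum_const, smul_eq_mul, mul_comm, Set.ncard_eq_toFinset_card']

lemma perfect_code (hcubic : G.IsRegularOfDegree 3) {D : Set V}
    (hdom : IsDomSet G D) (hcard : 4 * D.ncard = Fintype.card V) :
    (∀ d ∈ D, ∀ d' ∈ D, ¬G.Adj d d') ∧ (∀ v ∉ D, ∃! d, d ∈ D ∧ G.Adj v d) := by
  classical
  set cN : V → Finset V := fun d => insert d (G.neighborFinset d) with hcN
  have hcN4 : ∀ d, (cN d).card ≤ 4 := fun d =>
    le_trans (Finset.card_insert_le _ _) (by rw [nbr_card hcubic d])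
  have hmem : ∀ v d, v ∈ cN d ↔ (v = d ∨ G.Adj d v) := by
    intro v d
    simp [hcN, SimpleGraph.mem_neighborFinset]
  have hdisj : ∀ d1 ∈ D, ∀ d2 ∈ D, d1 ≠ d2 → ∀ v, v ∈ cN d1 → v ∈ cN d2 → False := by
    intro d1 hd1 d2 hd2 hne v hv1 hv2
    set Df := D.toFinset with hDf
    have hd1f : d1 ∈ Df := Set.mem_toFinset.2 hd1
    have hd2f : d2 ∈ Df := Set.mem_toFinset.2 hd2
    set U1 := (Df.erase d2).biUnion cN with hU1
    have hvU1 : v ∈ U1 :=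
      Finset.mem_biUnion.2 ⟨d1, Finset.mem_erase.2 ⟨hne, hd1f⟩, hv1⟩
    have cover : (Finset.univ : Finset V) ⊆ U1 ∪ (cN d2).erase v := by
      intro w _
      by_cases hw : w ∈ D
      · by_cases hw2 : w = d2
        · subst hw2
          by_cases hwv : w = v
          · exact Finset.mem_union.2 (Or.inl (hwv ▸ hvU1))
          · exact Finset.mem_union.2 (Or.inr (Finset.mem_erase.2
              ⟨hwv, (hmem w w).2 (Or.inl rfl)⟩))
        · exact Finset.mem_union.2 (Or.inl (Finset.mem_biUnion.2
            ⟨w, Finset.mem_erase.2 ⟨hw2, Set.mem_toFinset.2 hw⟩, (hmem w w).2 (Or.inl rfl)⟩))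
      · obtain ⟨d, hd, hadj⟩ := hdom w hw
        by_cases hd2' : d = d2
        · subst hd2'
          by_cases hwv : w = v
          · exact Finset.mem_union.2 (Or.inl (hwv ▸ hvU1))
          · exact Finset.mem_union.2 (Or.inr (Finset.mem_erase.2
              ⟨hwv, (hmem w d).2 (Or.inr hadj.symm)⟩))
        · exact Finset.mem_union.2 (Or.inl (Finset.mem_biUnion.2
            ⟨d, Finset.mem_erase.2 ⟨hd2', Set.mem_toFinset.2 hd⟩,
              (hmem w d).2 (Or.inr hadj.symm)⟩))
    have hcard1 : U1.card ≤ 4 * (Df.card - 1) := by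
      calc U1.card ≤ ∑ d ∈ Df.erase d2, (cN d).card := Finset.card_biUnion_le
        _ ≤ ∑ _d ∈ Df.erase d2, 4 := Finset.sum_le_sum (fun d _ => hcN4 d)
        _ = 4 * (Df.card - 1) := by
            rw [Finset.sum_const, smul_eq_mul, Finset.card_erase_of_mem hd2f, mul_comm]
    have hcard2 : ((cN d2).erase v).card ≤ 3 := by
      have h1 := Finset.card_erase_of_mem hv2
      have h4 := hcN4 d2
      have h5 : 0 < (cN d2).card := Finset.card_pos.2 ⟨v, hv2⟩
      omega
    have hn : Fintype.card V ≤ U1.card + ((cN d2).erase v).card := by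
      calc Fintype.card V = (Finset.univ : Finset V).card := Finset.card_univ.symm
        _ ≤ (U1 ∪ (cN d2).erase v).card := Finset.card_le_card cover
        _ ≤ _ := Finset.card_union_le _ _
    have hDfpos : 1 ≤ Df.card := Finset.card_pos.2 ⟨d2, hd2f⟩
    have hDcard : D.ncard = Df.card := Set.ncard_eq_toFinset_card' D
    have h4 := hcN4 d2
    omega
  constructor
  · intro d hd d' hd' hadj
    rcases eq_or_ne d d' with rfl | hne
    · exact G.irrefl hadj
    · exact hdisj d hd d' hd' hne d' ((hmem d' d).2 (Or.inr hadj)) ((hmem d' d').2 (Or.inl rfl))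
  · intro v hv
    obtain ⟨d, hd, hadj⟩ := hdom v hv
    refine ⟨d, ⟨hd, hadj⟩, ?_⟩
    rintro d' ⟨hd', hadj'⟩
    by_contra hne
    exact hdisj d' hd' d hd hne v ((hmem v d').2 (Or.inr hadj'.symm))
      ((hmem v d).2 (Or.inr hadj.symm))

lemma code_count (hcubic : G.IsRegularOfDegree 3) {A B D : Set V}
    (hbip : IsBipartitionOf G A B)
    (hind : ∀ d ∈ D, ∀ d' ∈ D, ¬G.Adj d d')
    (huniq : ∀ v ∉ D, ∃! d, d ∈ D ∧ G.Adj v d) :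
    (A \ D).ncard = 3 * (B ∩ D).ncard := by
  classical
  have hset : (A \ D).toFinset = (B ∩ D).toFinset.biUnion (fun d => G.neighborFinset d) := by
    ext a
    simp only [Set.mem_toFinset, Set.mem_diff, Finset.mem_biUnion, Set.mem_inter_iff,
      SimpleGraph.mem_neighborFinset]
    constructor
    · rintro ⟨haA, haD⟩
      obtain ⟨d, ⟨hd, hadj⟩, _⟩ := huniq a haD
      exact ⟨d, ⟨mem_B_of_adj hbip hadj haA, hd⟩, hadj.symm⟩
    · rintro ⟨d, ⟨hdB, hdD⟩, hadj⟩
      exact ⟨mem_A_of_adj hbip hadj hdB, fun haD => hind d hdD a haD hadj⟩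
  have hdisjf : ∀ d1 ∈ (B ∩ D).toFinset, ∀ d2 ∈ (B ∩ D).toFinset, d1 ≠ d2 →
      Disjoint (G.neighborFinset d1) (G.neighborFinset d2) := by
    intro d1 hd1 d2 hd2 hne
    rw [Finset.disjoint_left]
    intro w hw1 hw2
    rw [Set.mem_toFinset] at hd1 hd2
    rw [SimpleGraph.mem_neighborFinset] at hw1 hw2
    have hwD : w ∉ D := fun hwD => hind d1 hd1.2 w hwD hw1
    obtain ⟨d, _, hu⟩ := huniq w hwD
    exact hne ((hu d1 ⟨hd1.2, hw1.symm⟩).trans (hu d2 ⟨hd2.2, hw2.symm⟩).symm)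
  rw [Set.ncard_eq_toFinset_card', Set.ncard_eq_toFinset_card', hset,
    Finset.card_biUnion hdisjf]
  rw [Finset.sum_congr rfl (fun d _ => nbr_card hcubic d), Finset.sum_const, smul_eq_mul,
    mul_comm]

end Dom

section Construct
variable [Fintype V] {G : SimpleGraph V} [DecidableRel G.Adj]

lemma construct_decomp (hcubic : G.IsRegularOfDegree 3) (C : Set V) (m p : V → V)
    (h1 : ∀ c ∈ C, G.Adj c (m c))
    (h2 : ∀ c ∈ C, G.Adj (m c) (p c))
    (h3 : ∀ c ∈ C, ¬ G.Adj c (p c) ∧ p c ≠ c)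
    (h4 : ∀ c ∈ C, ∀ c' ∈ C, ¬ G.Adj c c')
    (h5 : ∀ c ∈ C, m c ∉ C ∧ p c ∉ C)
    (h6 : ∀ e ∈ G.edgeSet, (∃ c ∈ C, c ∈ e) ∨ ∃ c ∈ C, e = s(m c, p c))
    (h7 : ∀ c ∈ C, ∀ c' ∈ C, s(m c, p c) = s(m c', p c') → c = c') :
    IsDSSDecomposable G 3 C := by
  classical
  have hl : ∀ c : V, ∃ x y : V,
      c ∈ C → (x ≠ y ∧ (G.neighborFinset c).erase (m c) = {x, y}) := by
    intro c
    by_cases hc : c ∈ C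
    · have hcard : ((G.neighborFinset c).erase (m c)).card = 2 := by
        rw [Finset.card_erase_of_mem
          (by rw [SimpleGraph.mem_neighborFinset]; exact h1 c hc), nbr_card hcubic c]
      obtain ⟨x, y, hxy, hset⟩ := Finset.card_eq_two.1 hcard
      exact ⟨x, y, fun _ => ⟨hxy, hset⟩⟩
    · exact ⟨c, c, fun h => absurd h hc⟩
  choose l0 l1 hl using hl
  set cp : V → DoubleStarCopy V 3 := fun c => ⟨c, m c, p c, ![l0 c, l1 c]⟩ with hcp
  have cp_center : ∀ c, (cp c).center = c := fun c => rfl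
  have cp_mid : ∀ c, (cp c).mid = m c := fun c => rfl
  have cp_pend : ∀ c, (cp c).pend = p c := fun c => rfl
  have cp_l0 : ∀ c, (cp c).leaf 0 = l0 c := fun c => rfl
  have cp_l1 : ∀ c, (cp c).leaf 1 = l1 c := fun c => rfl
  have hlmem : ∀ c ∈ C, (G.Adj c (l0 c) ∧ l0 c ≠ m c) ∧ (G.Adj c (l1 c) ∧ l1 c ≠ m c) := by
    intro c hc
    obtain ⟨hxy, hset⟩ := hl c hc
    have m0 : l0 c ∈ (G.neighborFinset c).erase (m c) := by rw [hset]; simp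
    have m1 : l1 c ∈ (G.neighborFinset c).erase (m c) := by rw [hset]; simp
    rw [Finset.mem_erase, SimpleGraph.mem_neighborFinset] at m0 m1
    exact ⟨⟨m0.2, m0.1⟩, ⟨m1.2, m1.1⟩⟩
  have hcopy : ∀ c ∈ C, (cp c).IsCopyIn G := by
    intro c hc
    obtain ⟨⟨hal0, hl0m⟩, hal1, hl1m⟩ := hlmem c hc
    obtain ⟨hxy, _⟩ := hl c hc
    constructor
    · rw [vertList_eq3, cp_center, cp_mid, cp_pend, cp_l0, cp_l1]
      have hcm : c ≠ m c := G.ne_of_adj (h1 c hc)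
      have hcp' : c ≠ p c := fun h => (h3 c hc).2 h.symm
      have hcl0 : c ≠ l0 c := G.ne_of_adj hal0
      have hcl1 : c ≠ l1 c := G.ne_of_adj hal1
      have hmp : m c ≠ p c := G.ne_of_adj (h2 c hc)
      have hpl0 : p c ≠ l0 c := fun h => (h3 c hc).1 (h ▸ hal0)
      have hpl1 : p c ≠ l1 c := fun h => (h3 c hc).1 (h ▸ hal1)
      have hml0 : m c ≠ l0 c := hl0m.symm
      have hml1 : m c ≠ l1 c := hl1m.symm
      simp only [List.nodup_cons, List.mem_cons, List.not_mem_nil, List.mem_singleton,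
        List.nodup_nil, not_or, and_true]
      tauto
    · rw [edges_eq3, cp_center, cp_mid, cp_pend, cp_l0, cp_l1]
      intro e he
      simp only [Set.mem_insert_iff, Set.mem_singleton_iff] at he
      rcases he with rfl|rfl|rfl|rfl
      · exact (h1 c hc)
      · exact (h2 c hc)
      · exact hal0
      · exact hal1
  have mem_center_or : ∀ c ∈ C, ∀ e ∈ (cp c).edges, c ∈ e ∨ e = s(m c, p c) := by
    intro c hc e he
    rw [edges_eq3, cp_center, cp_mid, cp_pend, cp_l0, cp_l1] at he
    simp only [Set.mem_insert_iff, Set.mem_singleton_iff] at he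
    rcases he with rfl|rfl|rfl|rfl
    · exact Or.inl (Sym2.mem_mk_left _ _)
    · exact Or.inr rfl
    · exact Or.inl (Sym2.mem_mk_left _ _)
    · exact Or.inl (Sym2.mem_mk_left _ _)
  have key : ∀ c1 ∈ C, ∀ c2 ∈ C, ∀ e, e ∈ (cp c1).edges → e ∈ (cp c2).edges → c1 = c2 := by
    intro c1 hc1 c2 hc2 e he1 he2
    have heG : e ∈ G.edgeSet := (hcopy c1 hc1).2 he1
    rcases mem_center_or c1 hc1 e he1 with hm1 | hm1
    · rcases mem_center_or c2 hc2 e he2 with hm2 | hm2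
      · by_contra hne
        induction e with
        | _ u v =>
          rw [Sym2.mem_iff] at hm1 hm2
          rw [SimpleGraph.mem_edgeSet] at heG
          rcases hm1 with rfl | rfl <;> rcases hm2 with rfl | rfl
          · exact hne rfl
          · exact h4 c1 hc1 c2 hc2 heG
          · exact h4 c2 hc2 c1 hc1 heG
          · exact hne rfl
      · rw [hm2, Sym2.mem_iff] at hm1
        rcases hm1 with rfl | rfl
        · exact absurd hc1 (h5 c2 hc2).1
        · exact absurd hc1 (h5 c2 hc2).2
    · rcases mem_center_or c2 hc2 e he2 with hm2 | hm2
      · rw [hm1, Sym2.mem_iff] at hm2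
        rcases hm2 with rfl | rfl
        · exact absurd hc2 (h5 c1 hc1).1
        · exact absurd hc2 (h5 c1 hc1).2
      · exact h7 c1 hc1 c2 hc2 (hm1 ▸ hm2 ▸ rfl)
  refine ⟨cp '' C, ⟨?_, ?_⟩, ?_⟩
  · rintro t ⟨c, hc, rfl⟩
    exact hcopy c hc
  · intro e he
    have hex : ∃ c ∈ C, e ∈ (cp c).edges := by
      rcases h6 e he with ⟨c, hc, hce⟩ | ⟨c, hc, rfl⟩
      · exact ⟨c, hc, edge_at_center hcubic (hcopy c hc) he hce⟩
      · refine ⟨c, hc, ?_⟩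
        rw [edges_eq3, cp_mid, cp_pend]
        simp
    obtain ⟨c, hc, hce⟩ := hex
    refine ⟨cp c, ⟨⟨c, hc, rfl⟩, hce⟩, ?_⟩
    rintro t ⟨⟨c', hc', rfl⟩, hce'⟩
    rw [key c' hc' c hc e hce' hce]
  · ext v
    simp only [Set.mem_setOf_eq]
    constructor
    · intro hv
      exact ⟨cp v, ⟨v, hv, rfl⟩, rfl⟩
    · rintro ⟨t, ⟨c, hc, rfl⟩, rfl⟩
      exact hc

end Construct

section Side
variable [Fintype V] {G : SimpleGraph V} [DecidableRel G.Adj]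

lemma side_decomp (hcubic : G.IsRegularOfDegree 3) {A B D : Set V}
    (hbip : IsBipartitionOf G A B)
    (hind : ∀ d ∈ D, ∀ d' ∈ D, ¬G.Adj d d')
    (huniq : ∀ v ∉ D, ∃! d, d ∈ D ∧ G.Adj v d)
    (hsz : (A \ D).ncard = 3 * (A ∩ D).ncard) :
    IsDSSDecomposable G 3 (A \ D) := by
  classical
  set S : Set V := A \ D with hS
  set RE : Finset (Sym2 V) := G.edgeFinset.filter (fun e => ∀ v ∈ e, v ∉ S) with hRE
  have restr : ∀ e ∈ RE, ∃ d b : V,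
      e = s(d, b) ∧ d ∈ A ∧ d ∈ D ∧ b ∈ B ∧ b ∉ D ∧ G.Adj d b := by
    intro e he
    rw [hRE, Finset.mem_filter, SimpleGraph.mem_edgeFinset] at he
    obtain ⟨heG, hav⟩ := he
    induction e with
    | _ u v =>
      rw [SimpleGraph.mem_edgeSet] at heG
      have hu := hav u (Sym2.mem_mk_left u v)
      have hv := hav v (Sym2.mem_mk_right u v)
      have huniv : u ∈ A ∪ B := hbip.1 ▸ Set.mem_univ u
      rcases (Set.mem_union _ _ _).1 huniv with huA | huB
      · have huD : u ∈ D := by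
          by_contra h
          exact hu ⟨huA, h⟩
        have hvB : v ∈ B := mem_B_of_adj hbip heG huA
        have hvD : v ∉ D := fun hvD => hind u huD v hvD heG
        exact ⟨u, v, rfl, huA, huD, hvB, hvD, heG⟩
      · have hvA : v ∈ A := mem_A_of_adj hbip heG huB
        have hvD : v ∈ D := by
          by_contra h
          exact hv ⟨hvA, h⟩
        have huD : u ∉ D := fun huD => hind v hvD u huD heG.symm
        exact ⟨v, u, Sym2.eq_swap, hvA, hvD, huB, huD, heG.symm⟩
  have hdm0 : ∀ v : V, ∃ d : V, v ∉ D → (d ∈ D ∧ G.Adj v d ∧ ∀ d' ∈ D, G.Adj v d' → d' = d) := by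
    intro v
    by_cases hv : v ∈ D
    · exact ⟨v, fun h => absurd hv h⟩
    · obtain ⟨d, ⟨hd, hadj⟩, hu⟩ := huniq v hv
      exact ⟨d, fun _ => ⟨hd, hadj, fun d' hd' hadj' => hu d' ⟨hd', hadj'⟩⟩⟩
  choose dm hdm using hdm0
  have hREmem : ∀ b ∈ B, b ∉ D → s(dm b, b) ∈ RE := by
    intro b hbB hbD
    obtain ⟨hdmD, hdmAdj, _⟩ := hdm b hbD
    rw [hRE, Finset.mem_filter, SimpleGraph.mem_edgeFinset, SimpleGraph.mem_edgeSet]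
    refine ⟨hdmAdj.symm, ?_⟩
    intro v hv
    rw [Sym2.mem_iff] at hv
    rcases hv with rfl | rfl
    · exact fun hS' => hS'.2 hdmD
    · exact fun hS' => (Set.disjoint_left.mp hbip.2.1 hS'.1) hbB
  have hREcard : RE.card = 3 * (A ∩ D).toFinset.card := by
    have hRE2 : RE = (A ∩ D).toFinset.biUnion (fun d => G.incidenceFinset d) := by
      ext e
      constructor
      · intro he
        obtain ⟨d, b, rfl, hdA, hdD, _, _, hadj⟩ := restr _ he
        refine Finset.mem_biUnion.2 ⟨d, Set.mem_toFinset.2 ⟨hdA, hdD⟩, ?_⟩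
        rw [SimpleGraph.mem_incidenceFinset]
        exact ⟨(SimpleGraph.mem_edgeSet G).2 hadj, Sym2.mem_mk_left _ _⟩
      · intro he
        obtain ⟨d, hd, hinc⟩ := Finset.mem_biUnion.1 he
        rw [Set.mem_toFinset] at hd
        rw [SimpleGraph.mem_incidenceFinset] at hinc
        obtain ⟨heG, hde⟩ := hinc
        rw [hRE, Finset.mem_filter, SimpleGraph.mem_edgeFinset]
        refine ⟨heG, ?_⟩
        induction e with
        | _ u v =>
          rw [SimpleGraph.mem_edgeSet] at heG
          rw [Sym2.mem_iff] at hde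
          intro w hw
          rw [Sym2.mem_iff] at hw
          rcases hde with rfl | rfl
          · rcases hw with rfl | rfl
            · exact fun hS' => hS'.2 hd.2
            · exact fun hS' =>
                (Set.disjoint_left.mp hbip.2.1 hS'.1) (mem_B_of_adj hbip heG hd.1)
          · rcases hw with rfl | rfl
            · exact fun hS' =>
                (Set.disjoint_left.mp hbip.2.1 hS'.1) (mem_B_of_adj hbip heG.symm hd.1)
            · exact fun hS' => hS'.2 hd.2
    have hdisjf : ∀ d1 ∈ (A ∩ D).toFinset, ∀ d2 ∈ (A ∩ D).toFinset, d1 ≠ d2 →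
        Disjoint (G.incidenceFinset d1) (G.incidenceFinset d2) := by
      intro d1 hd1 d2 hd2 hne
      rw [Finset.disjoint_left]
      intro e he1 he2
      rw [SimpleGraph.mem_incidenceFinset] at he1 he2
      rw [Set.mem_toFinset] at hd1 hd2
      obtain ⟨heG, hd1e⟩ := he1
      obtain ⟨_, hd2e⟩ := he2
      induction e with
      | _ u v =>
        rw [SimpleGraph.mem_edgeSet] at heG
        rw [Sym2.mem_iff] at hd1e hd2e
        rcases hd1e with rfl | rfl <;> rcases hd2e with rfl | rfl
        · exact hne rfl
        · exact hind d1 hd1.2 d2 hd2.2 heG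
        · exact hind d2 hd2.2 d1 hd1.2 heG
        · exact hne rfl
    rw [hRE2, Finset.card_biUnion hdisjf]
    rw [Finset.sum_congr rfl (fun d _ => by
      rw [SimpleGraph.card_incidenceFinset_eq_degree, hcubic d])]
    rw [Finset.sum_const, smul_eq_mul, mul_comm]
  set r : V → Finset (Sym2 V) := fun s => RE.filter (fun e => auxAdj G s e) with hr
  have hrsub : ∀ s, r s ⊆ RE := fun s => Finset.filter_subset _ _
  have hE1 : ∀ s ∈ S, (r s).card = 2 := by
    intro s hs
    obtain ⟨hsA, hsD⟩ := hs
    set N2 : Finset V := (G.neighborFinset s).filter (fun w => w ∉ D) with hN2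
    have hN2card : N2.card = 2 := by
      have hfil : (G.neighborFinset s).filter (fun w => w ∈ D) = {dm s} := by
        obtain ⟨hdmD, hdmAdj, hdmU⟩ := hdm s hsD
        ext w
        simp only [Finset.mem_filter, SimpleGraph.mem_neighborFinset, Finset.mem_singleton]
        constructor
        · rintro ⟨hadj, hwD⟩
          exact hdmU w hwD hadj
        · rintro rfl
          exact ⟨hdmAdj, hdmD⟩
      have hsplit := Finset.card_filter_add_card_filter_not
        (s := G.neighborFinset s) (p := fun w => w ∈ D)
      rw [hfil, Finset.card_singleton, nbr_card hcubic s] at hsplit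
      rw [hN2]
      omega
    have hinj : Set.InjOn (fun b => s(dm b, b)) ↑N2 := by
      intro b1 hb1 b2 hb2 heq
      simp only [Sym2.eq_iff] at heq
      rcases heq with ⟨_, h2⟩ | ⟨h1, h2⟩
      · exact h2
      · exfalso
        rw [hN2] at hb1 hb2
        simp only [Finset.coe_filter, Set.mem_setOf_eq] at hb1 hb2
        obtain ⟨hdmD, _, _⟩ := hdm b1 hb1.2
        exact hb2.2 (h1 ▸ hdmD)
    have himg : r s = N2.image (fun b => s(dm b, b)) := by
      ext e
      constructor
      · intro he
        have heRE := (Finset.mem_filter.1 he).1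
        have haux := (Finset.mem_filter.1 he).2
        obtain ⟨d, b, rfl, hdA, hdD, hbB, hbD, hadj⟩ := restr _ heRE
        obtain ⟨w, hw, hadjsw⟩ := haux
        rw [Sym2.mem_iff] at hw
        have hsb : G.Adj s b := by
          rcases hw with rfl | rfl
          · exact absurd hadjsw (not_adj_A hbip hsA hdA)
          · exact hadjsw
        have hdmb : d = dm b := (hdm b hbD).2.2 d hdD hadj.symm
        refine Finset.mem_image.2 ⟨b, ?_, by rw [← hdmb]⟩
        rw [hN2, Finset.mem_filter, SimpleGraph.mem_neighborFinset]
        exact ⟨hsb, hbD⟩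
      · intro he
        obtain ⟨b, hb, rfl⟩ := Finset.mem_image.1 he
        rw [hN2, Finset.mem_filter, SimpleGraph.mem_neighborFinset] at hb
        obtain ⟨hsb, hbD⟩ := hb
        have hbB : b ∈ B := mem_B_of_adj hbip hsb hsA
        exact Finset.mem_filter.2 ⟨hREmem b hbB hbD, ⟨b, Sym2.mem_mk_right _ _, hsb⟩⟩
    rw [himg, Finset.card_image_of_injOn hinj, hN2card]
  have hE2 : ∀ e ∈ RE, (S.toFinset.filter (fun s => auxAdj G s e)).card ≤ 2 := by
    intro e he
    obtain ⟨d, b, rfl, hdA, hdD, hbB, hbD, hadj⟩ := restr e he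
    have hsub : S.toFinset.filter (fun x => auxAdj G x (s(d, b))) ⊆
        (G.neighborFinset b).erase d := by
      intro x hx
      rw [Finset.mem_filter, Set.mem_toFinset] at hx
      obtain ⟨⟨hxA, hxD⟩, w, hw, hadjx⟩ := hx
      rw [Sym2.mem_iff] at hw
      have hxb : G.Adj x b := by
        rcases hw with rfl | rfl
        · exact absurd hadjx (not_adj_A hbip hxA hdA)
        · exact hadjx
      rw [Finset.mem_erase, SimpleGraph.mem_neighborFinset]
      exact ⟨fun h => hxD (h ▸ hdD), hxb.symm⟩
    calc (S.toFinset.filter (fun x => auxAdj G x (s(d, b)))).card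
        ≤ ((G.neighborFinset b).erase d).card := Finset.card_le_card hsub
      _ ≤ 2 := by
          rw [Finset.card_erase_of_mem
            (by rw [SimpleGraph.mem_neighborFinset]; exact hadj.symm), nbr_card hcubic b]
  have hall : ∀ (W : Finset {x // x ∈ S.toFinset}),
      W.card ≤ (W.biUnion (fun s => r ↑s)).card := by
    intro W
    set U := W.biUnion (fun s => r ↑s) with hU
    have hUsub : U ⊆ RE := by
      intro e heU
      obtain ⟨s, _, hes⟩ := Finset.mem_biUnion.1 heU
      exact hrsub _ hes
    have h2W : 2 * W.card = ∑ s ∈ W, (r ↑s).card := by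
      have hWc : ∀ s ∈ W, (r ↑s).card = 2 :=
        fun (s : {x // x ∈ S.toFinset}) _ => hE1 s.1 (Set.mem_toFinset.1 s.2)
      rw [Finset.sum_congr rfl hWc, Finset.sum_const, smul_eq_mul, mul_comm]
    have hsum : ∑ s ∈ W, (r ↑s).card = ∑ s ∈ W, (U.filter (fun e => e ∈ r ↑s)).card := by
      apply Finset.sum_congr rfl
      intro s hsW
      congr 1
      apply Finset.Subset.antisymm
      · intro e he
        exact Finset.mem_filter.2 ⟨Finset.mem_biUnion.2 ⟨s, hsW, he⟩, he⟩
      · intro e he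
        exact (Finset.mem_filter.1 he).2
    have hswap : ∑ s ∈ W, (U.filter (fun e => e ∈ r ↑s)).card
        = ∑ e ∈ U, (W.filter (fun (x : {x // x ∈ S.toFinset}) => e ∈ r x.1)).card := by
      have hL : ∀ s ∈ W, (U.filter (fun e => e ∈ r ↑s)).card
          = ∑ e ∈ U, if e ∈ r ↑s then 1 else 0 :=
        fun (s : {x // x ∈ S.toFinset}) _ => Finset.card_filter _ _
      have hR : ∀ e ∈ U, (W.filter (fun (x : {x // x ∈ S.toFinset}) => e ∈ r x.1)).card
          = ∑ s ∈ W, if e ∈ r s.1 then 1 else 0 :=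
        fun e _ => Finset.card_filter _ _
      rw [Finset.sum_congr rfl hL, Finset.sum_congr rfl hR]
      exact Finset.sum_comm
    have hbound : ∀ e ∈ U, (W.filter (fun (x : {x // x ∈ S.toFinset}) => e ∈ r x.1)).card ≤ 2 := by
      intro e heU
      have heRE : e ∈ RE := hUsub heU
      have hle : (W.filter (fun (x : {x // x ∈ S.toFinset}) => e ∈ r x.1)).card
          ≤ (S.toFinset.filter (fun s => auxAdj G s e)).card := by
        apply Finset.card_le_card_of_injOn (fun (s : {x // x ∈ S.toFinset}) => s.1)
        · intro s hs
          rw [Finset.mem_coe, Finset.mem_filter] at hs ⊢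
          exact ⟨s.2, (Finset.mem_filter.1 hs.2).2⟩
        · intro s1 _ s2 _ h
          exact Subtype.ext h
      exact le_trans hle (hE2 e heRE)
    have hfin : ∑ e ∈ U, (W.filter (fun (x : {x // x ∈ S.toFinset}) => e ∈ r x.1)).card ≤ 2 * U.card := by
      calc ∑ e ∈ U, (W.filter (fun (x : {x // x ∈ S.toFinset}) => e ∈ r x.1)).card ≤ ∑ _e ∈ U, 2 :=
            Finset.sum_le_sum hbound
        _ = 2 * U.card := by rw [Finset.sum_const, smul_eq_mul, mul_comm]
    omega
  obtain ⟨f, hfinj, hfr⟩ := (Finset.all_card_le_biUnion_card_iff_exists_injective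
    (fun s : {x // x ∈ S.toFinset} => r ↑s)).1 hall
  have hScard : S.toFinset.card = RE.card := by
    rw [hREcard]
    have h := hsz
    rw [Set.ncard_eq_toFinset_card', Set.ncard_eq_toFinset_card'] at h
    exact h
  have hfsurj : ∀ e ∈ RE, ∃ s : {x // x ∈ S.toFinset}, f s = e := by
    have himg : Finset.univ.image f = RE := by
      apply Finset.eq_of_subset_of_card_le
      · intro e he
        obtain ⟨s, _, rfl⟩ := Finset.mem_image.1 he
        exact hrsub _ (hfr s)
      · rw [Finset.card_image_of_injective _ hfinj, Finset.card_univ, Fintype.card_coe]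
        exact hScard.ge
    intro e he
    obtain ⟨s, _, hse⟩ := Finset.mem_image.1 (himg ▸ he)
    exact ⟨s, hse⟩
  have hDB : ∀ e : Sym2 V, ∃ d b : V, e ∈ RE →
      (e = s(d, b) ∧ d ∈ A ∧ d ∈ D ∧ b ∈ B ∧ b ∉ D ∧ G.Adj d b) := by
    intro e
    induction e with
    | _ u v =>
      by_cases he : s(u, v) ∈ RE
      · obtain ⟨d, b, h1, h2, h3, h4, h5, h6⟩ := restr _ he
        exact ⟨d, b, fun _ => ⟨h1, h2, h3, h4, h5, h6⟩⟩
      · exact ⟨u, u, fun h => absurd h he⟩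
  choose dE bE hDB using hDB
  set m : V → V := fun c => if hc : c ∈ S.toFinset then bE (f ⟨c, hc⟩) else c with hm
  set p : V → V := fun c => if hc : c ∈ S.toFinset then dE (f ⟨c, hc⟩) else c with hp
  have hkey : ∀ c (hc : c ∈ S.toFinset),
      m c = bE (f ⟨c, hc⟩) ∧ p c = dE (f ⟨c, hc⟩) ∧ f ⟨c, hc⟩ ∈ RE ∧ auxAdj G c (f ⟨c, hc⟩) := by
    intro c hc
    have hmem : f ⟨c, hc⟩ ∈ r c := hfr ⟨c, hc⟩
    refine ⟨by rw [hm]; simp only; rw [dif_pos hc], by rw [hp]; simp only; rw [dif_pos hc],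
      hrsub _ hmem, (Finset.mem_filter.1 hmem).2⟩
  have hadj_cb : ∀ c (hc : c ∈ S), G.Adj c (bE (f ⟨c, Set.mem_toFinset.2 hc⟩)) := by
    intro c hc
    have hc' := Set.mem_toFinset.2 hc
    obtain ⟨_, _, hRE', haux⟩ := hkey c hc'
    obtain ⟨heq, hdA, hdD, hbB, hbD, hadj⟩ := hDB _ hRE'
    obtain ⟨w, hw, hadjw⟩ := haux
    rw [heq, Sym2.mem_iff] at hw
    rcases hw with rfl | rfl
    · exact absurd hadjw (not_adj_A hbip hc.1 hdA)
    · exact hadjw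
  have hc1 : ∀ c ∈ S, G.Adj c (m c) := by
    intro c hc
    have hc' := Set.mem_toFinset.2 hc
    rw [(hkey c hc').1]
    exact hadj_cb c hc
  have hc2 : ∀ c ∈ S, G.Adj (m c) (p c) := by
    intro c hc
    have hc' := Set.mem_toFinset.2 hc
    obtain ⟨hm', hp', hRE', _⟩ := hkey c hc'
    obtain ⟨_, _, _, _, _, hadj⟩ := hDB _ hRE'
    rw [hm', hp']
    exact hadj.symm
  have hc3 : ∀ c ∈ S, ¬ G.Adj c (p c) ∧ p c ≠ c := by
    intro c hc
    have hc' := Set.mem_toFinset.2 hc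
    obtain ⟨_, hp', hRE', _⟩ := hkey c hc'
    obtain ⟨_, hdA, hdD, _, _, _⟩ := hDB _ hRE'
    rw [hp']
    exact ⟨not_adj_A hbip hc.1 hdA, fun h => hc.2 (h ▸ hdD)⟩
  have hc4 : ∀ c ∈ S, ∀ c' ∈ S, ¬ G.Adj c c' :=
    fun c hc c' hc' => not_adj_A hbip hc.1 hc'.1
  have hc5 : ∀ c ∈ S, m c ∉ S ∧ p c ∉ S := by
    intro c hc
    have hc' := Set.mem_toFinset.2 hc
    obtain ⟨hm', hp', hRE', _⟩ := hkey c hc'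
    obtain ⟨_, _, hdD, hbB, _, _⟩ := hDB _ hRE'
    rw [hm', hp']
    constructor
    · exact fun hS' => (Set.disjoint_left.mp hbip.2.1 hS'.1) hbB
    · exact fun hS' => hS'.2 hdD
  have hc6 : ∀ e ∈ G.edgeSet, (∃ c ∈ S, c ∈ e) ∨ ∃ c ∈ S, e = s(m c, p c) := by
    intro e he
    by_cases hex : ∃ c ∈ S, c ∈ e
    · exact Or.inl hex
    · push_neg at hex
      have heRE : e ∈ RE := Finset.mem_filter.2
        ⟨SimpleGraph.mem_edgeFinset.2 he, fun v hv hvS => hex v hvS hv⟩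
      obtain ⟨s, hse⟩ := hfsurj e heRE
      have hcS : (↑s : V) ∈ S := Set.mem_toFinset.1 s.2
      refine Or.inr ⟨↑s, hcS, ?_⟩
      have hc' : (↑s : V) ∈ S.toFinset := s.2
      have hfeq : f ⟨↑s, hc'⟩ = e := by
        rw [← hse]
      obtain ⟨hm', hp', hRE', _⟩ := hkey ↑s hc'
      obtain ⟨heq, _, _, _, _, _⟩ := hDB _ hRE'
      rw [hm', hp', hfeq]
      rw [hfeq] at heq
      exact heq.trans Sym2.eq_swap
  have hc7 : ∀ c ∈ S, ∀ c' ∈ S, s(m c, p c) = s(m c', p c') → c = c' := by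
    intro c hc c' hc' heq
    have hcf := Set.mem_toFinset.2 hc
    have hcf' := Set.mem_toFinset.2 hc'
    obtain ⟨hm1, hp1, hRE1, _⟩ := hkey c hcf
    obtain ⟨hm2, hp2, hRE2, _⟩ := hkey c' hcf'
    obtain ⟨heq1, _, _, _, _, _⟩ := hDB _ hRE1
    obtain ⟨heq2, _, _, _, _, _⟩ := hDB _ hRE2
    have hfeq : f ⟨c, hcf⟩ = f ⟨c', hcf'⟩ := by
      rw [heq1, heq2]
      rw [hm1, hp1, hm2, hp2] at heq
      rw [Sym2.eq_swap] at heq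
      rw [heq]
      exact Sym2.eq_swap
    have := hfinj hfeq
    exact congrArg Subtype.val this
  exact construct_decomp hcubic S m p hc1 hc2 hc3 hc4 hc5 hc6 hc7

end Side

section Converse
variable [Fintype V] {G : SimpleGraph V} [DecidableRel G.Adj]

lemma dom_of_decomps {A B S : Set V} {k : ℕ}
    (hcubic : G.IsRegularOfDegree 3) (hbip : IsBipartitionOf G A B)
    (hsub : S ⊆ A) (hcardV : Fintype.card V = 8 * k)
    (hScard : S.ncard = 3 * k)
    (hd2 : IsDSSDecomposable G 3 (nbhd G (A \ S))) :
    ∃ D : Set V, IsDomSet G D ∧ D.ncard = 2 * k := by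
  classical
  set T : Set V := nbhd G (A \ S) with hT
  obtain ⟨𝒟, hD, hC⟩ := hd2
  have hTcard : T.ncard = 3 * k := by
    have h8 := card_centers hD hcubic hC
    omega
  have hTB : T ⊆ B := by
    rintro t ⟨a, ha, hadj⟩
    exact mem_B_of_adj hbip hadj ha.1
  have hAB := ncard_bip_eq hcubic hbip
  have hABn := ncard_bip_add hbip
  have hA4 : A.ncard = 4 * k := by omega
  have hB4 : B.ncard = 4 * k := by omega
  have hBT : (B \ T).ncard = k := by
    rw [Set.ncard_diff hTB]
    omega
  have hAS : (A \ S).ncard = k := by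
    rw [Set.ncard_diff hsub]
    omega
  set RE : Finset (Sym2 V) := G.edgeFinset.filter (fun e => ∀ v ∈ e, v ∉ T) with hRE
  have restr : ∀ e ∈ RE, ∃ x b : V, e = s(x, b) ∧ x ∈ S ∧ b ∈ B ∧ b ∉ T ∧ G.Adj x b := by
    intro e he
    rw [hRE, Finset.mem_filter, SimpleGraph.mem_edgeFinset] at he
    obtain ⟨heG, hav⟩ := he
    induction e with
    | _ u v =>
      rw [SimpleGraph.mem_edgeSet] at heG
      have hnbr : ∀ x y : V, G.Adj x y → x ∈ A → y ∉ T → x ∈ S := by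
        intro x y hxy hxA hyT
        by_contra hxS
        exact hyT ⟨x, ⟨hxA, hxS⟩, hxy⟩
      have huniv : u ∈ A ∪ B := hbip.1 ▸ Set.mem_univ u
      have hu := hav u (Sym2.mem_mk_left u v)
      have hv := hav v (Sym2.mem_mk_right u v)
      rcases (Set.mem_union _ _ _).1 huniv with huA | huB
      · exact ⟨u, v, rfl, hnbr u v heG huA hv, mem_B_of_adj hbip heG huA, hv, heG⟩
      · exact ⟨v, u, Sym2.eq_swap, hnbr v u heG.symm (mem_A_of_adj hbip heG huB) hu,
          huB, hu, heG.symm⟩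
  have hREcard : RE.card = 3 * k := by
    have hRE2 : RE = (B \ T).toFinset.biUnion (fun b => G.incidenceFinset b) := by
      ext e
      constructor
      · intro he
        obtain ⟨x, b, rfl, hxS, hbB, hbT, hadj⟩ := restr _ he
        refine Finset.mem_biUnion.2 ⟨b, Set.mem_toFinset.2 ⟨hbB, hbT⟩, ?_⟩
        rw [SimpleGraph.mem_incidenceFinset]
        exact ⟨(SimpleGraph.mem_edgeSet G).2 hadj, Sym2.mem_mk_right _ _⟩
      · intro he
        obtain ⟨b, hb, hinc⟩ := Finset.mem_biUnion.1 he
        rw [Set.mem_toFinset] at hb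
        rw [SimpleGraph.mem_incidenceFinset] at hinc
        obtain ⟨heG, hbe⟩ := hinc
        rw [hRE, Finset.mem_filter, SimpleGraph.mem_edgeFinset]
        refine ⟨heG, ?_⟩
        clear he
        induction e with
        | _ u v =>
          rw [SimpleGraph.mem_edgeSet] at heG
          rw [Sym2.mem_iff] at hbe
          intro w hw
          rw [Sym2.mem_iff] at hw
          have hnotT : ∀ x : V, G.Adj b x → x ∉ T := by
            intro x hbx hxT
            exact (Set.disjoint_left.mp hbip.2.1 (mem_A_of_adj hbip hbx hb.1)) (hTB hxT)
          rcases hbe with rfl | rfl <;> rcases hw with rfl | rfl <;>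
            first
              | exact hb.2
              | exact hnotT _ heG
              | exact hnotT _ heG.symm
    have hdisjf : ∀ b1 ∈ (B \ T).toFinset, ∀ b2 ∈ (B \ T).toFinset, b1 ≠ b2 →
        Disjoint (G.incidenceFinset b1) (G.incidenceFinset b2) := by
      intro b1 hb1 b2 hb2 hne
      rw [Finset.disjoint_left]
      intro e he1 he2
      rw [SimpleGraph.mem_incidenceFinset] at he1 he2
      rw [Set.mem_toFinset] at hb1 hb2
      obtain ⟨heG, hb1e⟩ := he1
      obtain ⟨_, hb2e⟩ := he2
      induction e with
      | _ u v =>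
        rw [SimpleGraph.mem_edgeSet] at heG
        rw [Sym2.mem_iff] at hb1e hb2e
        rcases hb1e with rfl | rfl <;> rcases hb2e with rfl | rfl
        · exact hne rfl
        · exact not_adj_A (bip_symm hbip) hb1.1 hb2.1 heG
        · exact not_adj_A (bip_symm hbip) hb2.1 hb1.1 heG
        · exact hne rfl
    rw [hRE2, Finset.card_biUnion hdisjf]
    rw [Finset.sum_congr rfl (fun b _ => by
      rw [SimpleGraph.card_incidenceFinset_eq_degree, hcubic b])]
    rw [Finset.sum_const, smul_eq_mul]
    rw [← Set.ncard_eq_toFinset_card', hBT]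
    omega
  have hcopy_of : ∀ e ∈ RE, ∀ x, x ∈ S → x ∈ e → ∃ t ∈ 𝒟,
      e = s(t.mid, t.pend) ∧ t.mid = x ∧ t.center ∈ T ∧ G.Adj t.center x := by
    intro e he x hxS hxe
    have heG : e ∈ G.edgeSet := by
      have h := (Finset.mem_filter.1 he).1
      rwa [SimpleGraph.mem_edgeFinset] at h
    have havoid : ∀ v ∈ e, v ∉ T := (Finset.mem_filter.1 he).2
    obtain ⟨t, ⟨ht, hte⟩, _⟩ := hD.2 e heG
    have htC : t.center ∈ T := by
      rw [hC]
      exact ⟨t, ht, rfl⟩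
    have hcopy := hD.1 t ht
    have hmp : e = s(t.mid, t.pend) := by
      rw [edges_eq3] at hte
      simp only [Set.mem_insert_iff, Set.mem_singleton_iff] at hte
      rcases hte with h | h | h | h
      · exact absurd htC (havoid t.center (by rw [h]; exact Sym2.mem_mk_left _ _))
      · exact h
      · exact absurd htC (havoid t.center (by rw [h]; exact Sym2.mem_mk_left _ _))
      · exact absurd htC (havoid t.center (by rw [h]; exact Sym2.mem_mk_left _ _))
    obtain ⟨x', b, heq, hx'S, hbB, hbT, hadj⟩ := restr e he
    have hxx' : x = x' := by
      have hm := hxe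
      rw [heq, Sym2.mem_iff] at hm
      rcases hm with rfl | rfl
      · rfl
      · exact absurd hbB (Set.disjoint_left.mp hbip.2.1 (hsub hxS))
    have hmidA : t.mid ∈ A := mem_A_of_adj hbip (adj_of_copy hcopy).1 (hTB htC)
    have hmidx : t.mid = x := by
      have hmm : t.mid ∈ e := by rw [hmp]; exact Sym2.mem_mk_left _ _
      rw [heq, Sym2.mem_iff] at hmm
      rcases hmm with h | h
      · exact h.trans hxx'.symm
      · exact absurd hbB (h ▸ Set.disjoint_left.mp hbip.2.1 hmidA)
    exact ⟨t, ht, hmp, hmidx, htC, hmidx ▸ (adj_of_copy hcopy).1⟩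
  have hRs1 : ∀ x ∈ S, (RE.filter (fun e => x ∈ e)).card ≤ 1 := by
    intro x hxS
    by_contra hgt
    push_neg at hgt
    obtain ⟨e1, he1, e2, he2, hne⟩ := Finset.one_lt_card.1 hgt
    rw [Finset.mem_filter] at he1 he2
    obtain ⟨t1, ht1, hmp1, hmid1, hc1T, hc1x⟩ := hcopy_of e1 he1.1 x hxS he1.2
    obtain ⟨t2, ht2, hmp2, hmid2, hc2T, hc2x⟩ := hcopy_of e2 he2.1 x hxS he2.2
    have htne : t1 ≠ t2 := fun h => hne (by rw [hmp1, hmp2, h])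
    have hcne : t1.center ≠ t2.center := fun h => htne (center_inj hD hcubic ht1 ht2 h)
    have hxA : x ∈ A := hsub hxS
    have hcx1 : t1.center ≠ x := fun h =>
      Set.disjoint_left.mp hbip.2.1 hxA (h ▸ hTB hc1T)
    have hcx2 : t2.center ≠ x := fun h =>
      Set.disjoint_left.mp hbip.2.1 hxA (h ▸ hTB hc2T)
    have hTavoid : ∀ e' ∈ RE, ∀ c, c ∈ T → c ∈ e' → False :=
      fun e' he' c hcT hce => (Finset.mem_filter.1 he').2 c hce hcT
    have d13 : e1 ≠ s(t1.center, x) := fun h =>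
      hTavoid e1 he1.1 t1.center hc1T (by rw [h]; exact Sym2.mem_mk_left _ _)
    have d14 : e1 ≠ s(t2.center, x) := fun h =>
      hTavoid e1 he1.1 t2.center hc2T (by rw [h]; exact Sym2.mem_mk_left _ _)
    have d23 : e2 ≠ s(t1.center, x) := fun h =>
      hTavoid e2 he2.1 t1.center hc1T (by rw [h]; exact Sym2.mem_mk_left _ _)
    have d24 : e2 ≠ s(t2.center, x) := fun h =>
      hTavoid e2 he2.1 t2.center hc2T (by rw [h]; exact Sym2.mem_mk_left _ _)
    have d34 : s(t1.center, x) ≠ s(t2.center, x) := by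
      intro h
      rcases Sym2.eq_iff.1 h with ⟨h1, _⟩ | ⟨h1, _⟩
      · exact hcne h1
      · exact hcx1 h1
    set F : Finset (Sym2 V) := {e1, e2, s(t1.center, x), s(t2.center, x)} with hF
    have hsub4 : F ⊆ G.incidenceFinset x := by
      intro e he
      rw [hF] at he
      simp only [Finset.mem_insert, Finset.mem_singleton] at he
      rw [SimpleGraph.mem_incidenceFinset]
      have hRE_edge : ∀ e' ∈ RE, e' ∈ G.edgeSet := by
        intro e' he'
        have h := (Finset.mem_filter.1 he').1
        rwa [SimpleGraph.mem_edgeFinset] at h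
      rcases he with rfl | rfl | rfl | rfl
      · exact ⟨hRE_edge e he1.1, he1.2⟩
      · exact ⟨hRE_edge e he2.1, he2.2⟩
      · exact ⟨(SimpleGraph.mem_edgeSet G).2 hc1x, Sym2.mem_mk_right _ _⟩
      · exact ⟨(SimpleGraph.mem_edgeSet G).2 hc2x, Sym2.mem_mk_right _ _⟩
    have hcard4 : F.card = 4 := by
      rw [hF]
      rw [Finset.card_insert_of_notMem (by
        simp only [Finset.mem_insert, Finset.mem_singleton]
        push_neg
        exact ⟨hne, d13, d14⟩)]
      rw [Finset.card_insert_of_notMem (by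
        simp only [Finset.mem_insert, Finset.mem_singleton]
        push_neg
        exact ⟨d23, d24⟩)]
      rw [Finset.card_insert_of_notMem (by
        simp only [Finset.mem_singleton]
        exact d34)]
      rw [Finset.card_singleton]
    have hcontra : (4 : ℕ) ≤ 3 := by
      calc (4 : ℕ) = F.card := hcard4.symm
        _ ≤ (G.incidenceFinset x).card := Finset.card_le_card hsub4
        _ = 3 := by rw [SimpleGraph.card_incidenceFinset_eq_degree, hcubic x]
    omega
  have hAend : ∀ e : Sym2 V, ∃ x : V, e ∈ RE →
      (x ∈ S ∧ x ∈ e ∧ ∀ y ∈ e, y ∈ S → y = x) := by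
    intro e
    induction e with
    | _ u v =>
      by_cases he : s(u, v) ∈ RE
      · obtain ⟨x, b, heq, hxS, hbB, hbT, hadj⟩ := restr _ he
        refine ⟨x, fun _ => ⟨hxS, by rw [heq]; exact Sym2.mem_mk_left _ _, ?_⟩⟩
        intro y hy hyS
        rw [heq, Sym2.mem_iff] at hy
        rcases hy with rfl | rfl
        · rfl
        · exact absurd hbB (Set.disjoint_left.mp hbip.2.1 (hsub hyS))
      · exact ⟨u, fun h => absurd h he⟩
  choose sEnd hsEnd using hAend
  have hfib : RE.card = ∑ x ∈ S.toFinset, (RE.filter (fun e => sEnd e = x)).card :=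
    Finset.card_eq_sum_card_fiberwise (fun e he => Set.mem_toFinset.2 (hsEnd e he).1)
  have hfil_eq : ∀ x ∈ S.toFinset,
      (RE.filter (fun e => sEnd e = x)).card = (RE.filter (fun e => x ∈ e)).card := by
    intro x hx
    congr 1
    ext e
    simp only [Finset.mem_filter]
    constructor
    · rintro ⟨he, rfl⟩
      exact ⟨he, (hsEnd e he).2.1⟩
    · rintro ⟨he, hxe⟩
      exact ⟨he, ((hsEnd e he).2.2 x hxe (Set.mem_toFinset.1 hx)).symm⟩
  have hsum3k : ∑ x ∈ S.toFinset, (RE.filter (fun e => x ∈ e)).card = 3 * k := by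
    rw [← Finset.sum_congr rfl hfil_eq, ← hfib, hREcard]
  have hScard' : S.toFinset.card = 3 * k := by
    rw [← Set.ncard_eq_toFinset_card', hScard]
  have hall1 : ∀ x ∈ S, (RE.filter (fun e => x ∈ e)).card = 1 := by
    intro x hxS
    by_contra hne1
    have hlt : (RE.filter (fun e => x ∈ e)).card < 1 := by
      have := hRs1 x hxS
      omega
    have hstrict : ∑ y ∈ S.toFinset, (RE.filter (fun e => y ∈ e)).card
        < ∑ _y ∈ S.toFinset, 1 := by
      apply Finset.sum_lt_sum
      · exact fun y hy => hRs1 y (Set.mem_toFinset.1 hy)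
      · exact ⟨x, Set.mem_toFinset.2 hxS, hlt⟩
    rw [hsum3k, Finset.sum_const, smul_eq_mul, mul_one, hScard'] at hstrict
    omega
  have hdomS : ∀ x ∈ S, ∃ w, w ∈ B \ T ∧ G.Adj x w := by
    intro x hxS
    have h1 := hall1 x hxS
    obtain ⟨e, hefil⟩ := Finset.card_eq_one.1 h1
    have hemem : e ∈ RE.filter (fun e => x ∈ e) := by
      rw [hefil]
      exact Finset.mem_singleton_self e
    rw [Finset.mem_filter] at hemem
    obtain ⟨x', b, heq, hx'S, hbB, hbT, hadj⟩ := restr e hemem.1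
    have hxx' : x = x' := by
      have hm := hemem.2
      rw [heq, Sym2.mem_iff] at hm
      rcases hm with rfl | rfl
      · rfl
      · exact absurd hbB (Set.disjoint_left.mp hbip.2.1 (hsub hxS))
    exact ⟨b, ⟨hbB, hbT⟩, hxx' ▸ hadj⟩
  refine ⟨(A \ S) ∪ (B \ T), ?_, ?_⟩
  · intro v hv
    have hvU : v ∈ A ∪ B := hbip.1 ▸ Set.mem_univ v
    rcases (Set.mem_union _ _ _).1 hvU with hvA | hvB
    · have hvS : v ∈ S := by
        by_contra h
        exact hv (Set.mem_union_left _ ⟨hvA, h⟩)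
      obtain ⟨w, hw, hadj⟩ := hdomS v hvS
      exact ⟨w, Set.mem_union_right _ hw, hadj⟩
    · have hvT : v ∈ T := by
        by_contra h
        exact hv (Set.mem_union_right _ ⟨hvB, h⟩)
      obtain ⟨a, ha, hadj⟩ := hvT
      exact ⟨a, Set.mem_union_left _ ha, hadj.symm⟩
  · rw [Set.ncard_union_eq (Set.disjoint_of_subset Set.diff_subset Set.diff_subset hbip.2.1)
      (Set.toFinite _) (Set.toFinite _), hAS, hBT]
    omega

end Converse

end S8Aux

/-- Let `G` be a cubic bipartite graph of order `n` with bipartition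
`(A, B)` and `8 ∣ n`.  Then `γ(G) = n/4` iff there is `S ⊆ A` of size `3n/8` such that `G`
is both `(S_{1,2}, S)`-decomposable and `(S_{1,2}, N(A ∖ S))`-decomposable. -/
theorem statement8 {V : Type*} [Fintype V] (G : SimpleGraph V) [DecidableRel G.Adj]
    (n : ℕ) (hn : Fintype.card V = n) (hcubic : G.IsRegularOfDegree 3)
    (A B : Set V) (hbip : IsBipartitionOf G A B) (hdvd : 8 ∣ n) :
    4 * domNumber G = n ↔
      ∃ S ⊆ A, 8 * S.ncard = 3 * n ∧ IsDSSDecomposable G 3 S ∧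
        IsDSSDecomposable G 3 (nbhd G (A \ S)) := by
  classical
  obtain ⟨k, rfl⟩ := hdvd
  constructor
  · intro hγ
    obtain ⟨D, hdom, hDcard⟩ := S8Aux.exists_min_domSet G
    have h4 : 4 * D.ncard = Fintype.card V := by rw [hDcard, hn]; exact hγ
    obtain ⟨hind, huniq⟩ := S8Aux.perfect_code hcubic hdom h4
    have hAB := S8Aux.ncard_bip_eq hcubic hbip
    have hABn := S8Aux.ncard_bip_add hbip
    have hcnt := S8Aux.code_count hcubic hbip hind huniq
    have hcnt' := S8Aux.code_count hcubic (S8Aux.bip_symm hbip) hind huniq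
    have hDsplit : (A ∩ D).ncard + (B ∩ D).ncard = D.ncard := by
      rw [← Set.ncard_union_eq
        (Set.disjoint_of_subset Set.inter_subset_left Set.inter_subset_left hbip.2.1)
        (Set.toFinite _) (Set.toFinite _)]
      congr 1
      rw [← Set.union_inter_distrib_right, hbip.1, Set.univ_inter]
    have hAsplit : (A ∩ D).ncard + (A \ D).ncard = A.ncard :=
      Set.ncard_inter_add_ncard_diff_eq_ncard A D (Set.toFinite A)
    have hBsplit : (B ∩ D).ncard + (B \ D).ncard = B.ncard :=
      Set.ncard_inter_add_ncard_diff_eq_ncard B D (Set.toFinite B)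
    have hn8 : Fintype.card V = 8 * k := hn
    have hsz1 : (A \ D).ncard = 3 * (A ∩ D).ncard := by omega
    have hsz2 : (B \ D).ncard = 3 * (B ∩ D).ncard := by omega
    have hdecomp1 : IsDSSDecomposable G 3 (A \ D) :=
      S8Aux.side_decomp hcubic hbip hind huniq hsz1
    have hnb : nbhd G (A ∩ D) = B \ D := by
      ext v
      constructor
      · rintro ⟨d, ⟨hdA, hdD⟩, hadj⟩
        exact ⟨S8Aux.mem_B_of_adj hbip hadj hdA, fun hvD => hind d hdD v hvD hadj⟩
      · rintro ⟨hvB, hvD⟩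
        obtain ⟨d, ⟨hdD, hadj⟩, _⟩ := huniq v hvD
        exact ⟨d, ⟨S8Aux.mem_A_of_adj hbip hadj hvB, hdD⟩, hadj.symm⟩
    have hdecomp2 : IsDSSDecomposable G 3 (B \ D) :=
      S8Aux.side_decomp hcubic (S8Aux.bip_symm hbip) hind huniq hsz2
    refine ⟨A \ D, Set.diff_subset, by omega, hdecomp1, ?_⟩
    rw [Set.diff_diff_right_self, hnb]
    exact hdecomp2
  · rintro ⟨S, hsub, hS8, _, hd2⟩
    have hn8 : Fintype.card V = 8 * k := hn
    have hScard : S.ncard = 3 * k := by omega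
    obtain ⟨D, hdom, hDcard⟩ := S8Aux.dom_of_decomps hcubic hbip hsub hn8 hScard hd2
    have hle : domNumber G ≤ 2 * k := hDcard ▸ S8Aux.domNumber_le_of hdom
    obtain ⟨D0, hdom0, hD0⟩ := S8Aux.exists_min_domSet G
    have hge := S8Aux.card_le_of_domSet hcubic hdom0
    rw [hD0] at hge
    omega
end

section
/- Let G be a cubic (3-regular) bipartite simple graph of order n. If the domination number of G satisfies γ(G) = n/4, then G has an S_{1,2}-decomposition. -/
open SimpleGraph

variable {V : Type*}

/-- If `G` is a cubic bipartite graph of order `n` with `γ(G) = n/4`,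
then `G` has an `S_{1,2}`-decomposition. -/
theorem statement9 {V : Type*} [Fintype V] (G : SimpleGraph V) [DecidableRel G.Adj]
    (n : ℕ) (hn : Fintype.card V = n) (hcubic : G.IsRegularOfDegree 3)
    (hbip : ∃ A B : Set V, IsBipartitionOf G A B)
    (hdom : 4 * domNumber G = n) :
    HasDSDecomp G 3 := by
  classical
  subst hn
  obtain ⟨A, B, hABu, hABd, hABadj⟩ := hbip
  have hAB : ∀ v : V, v ∈ A ∨ v ∈ B := fun v => (hABu.symm ▸ Set.mem_univ v : v ∈ A ∪ B)
  have hnAB : ∀ v ∈ A, v ∉ B := fun v hv => Set.disjoint_left.mp hABd hv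
  have hadjAB : ∀ u v, G.Adj u v → u ∈ A → v ∈ B := fun u v h hu => (hABadj h).mp hu
  have hadjBA : ∀ u v, G.Adj u v → u ∈ B → v ∈ A := fun u v h hu =>
    (hAB v).resolve_right (fun hv => hnAB _ ((hABadj h).mpr hv) hu)
  -- a minimum dominating set
  have hne : ({k | ∃ D : Set V, IsDomSet G D ∧ D.ncard = k}).Nonempty :=
    ⟨(Set.univ : Set V).ncard, Set.univ, fun v hv => absurd (Set.mem_univ v) hv, rfl⟩
  obtain ⟨D, hDdom, hDcard⟩ := Nat.sInf_mem hne
  set Df : Finset V := D.toFinset with hDfdef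
  have hDcard' : 4 * Df.card = Fintype.card V := by
    rw [hDfdef, ← Set.ncard_eq_toFinset_card', hDcard]; exact hdom
  have hmemDf : ∀ v, v ∈ Df ↔ v ∈ D := fun v => Set.mem_toFinset
  set Nc : V → Finset V := fun d => insert d (G.neighborFinset d) with hNcdef
  have hNcCard : ∀ d, (Nc d).card = 4 := by
    intro d
    rw [hNcdef]
    rw [Finset.card_insert_of_notMem (by simp), G.card_neighborFinset_eq_degree, hcubic d]
  have hcov : ∀ v : V, ∃ d ∈ Df, v ∈ Nc d := by
    intro v
    by_cases hv : v ∈ D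
    · exact ⟨v, (hmemDf v).mpr hv, Finset.mem_insert_self _ _⟩
    · obtain ⟨d, hd, hadjvd⟩ := hDdom v hv
      exact ⟨d, (hmemDf d).mpr hd,
        Finset.mem_insert_of_mem ((G.mem_neighborFinset d v).mpr hadjvd.symm)⟩
  -- the closed neighbourhoods of Df are pairwise disjoint
  have hkey : ∀ d1 ∈ Df, ∀ d2 ∈ Df, ∀ x : V, x ∈ Nc d1 → x ∈ Nc d2 → d1 = d2 := by
    intro d1 h1 d2 h2 x hx1 hx2
    by_contra hne12
    have hsub : (Finset.univ : Finset V) ⊆ (Nc d1).erase x ∪ (Df.erase d1).biUnion Nc := by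
      intro y _
      obtain ⟨d, hd, hy⟩ := hcov y
      by_cases hdd : d = d1
      · subst hdd
        by_cases hyx : y = x
        · subst hyx
          exact Finset.mem_union_right _ (Finset.mem_biUnion.mpr
            ⟨d2, Finset.mem_erase.mpr ⟨fun h => hne12 h.symm, h2⟩, hx2⟩)
        · exact Finset.mem_union_left _ (Finset.mem_erase.mpr ⟨hyx, hy⟩)
      · exact Finset.mem_union_right _ (Finset.mem_biUnion.mpr
          ⟨d, Finset.mem_erase.mpr ⟨hdd, hd⟩, hy⟩)
    have h1' : ((Nc d1).erase x).card = 3 := by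
      rw [Finset.card_erase_of_mem hx1, hNcCard]
    have h2' : ((Df.erase d1).biUnion Nc).card ≤ 4 * (Df.card - 1) := by
      calc ((Df.erase d1).biUnion Nc).card ≤ ∑ d ∈ Df.erase d1, (Nc d).card :=
            Finset.card_biUnion_le
        _ = 4 * (Df.card - 1) := by
            rw [Finset.sum_congr rfl (fun d _ => hNcCard d), Finset.sum_const,
              Finset.card_erase_of_mem h1, smul_eq_mul, mul_comm]
    have hcard2 : Fintype.card V ≤ 3 + 4 * (Df.card - 1) := by
      calc Fintype.card V = Finset.univ.card := (Finset.card_univ).symm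
        _ ≤ ((Nc d1).erase x ∪ (Df.erase d1).biUnion Nc).card := Finset.card_le_card hsub
        _ ≤ ((Nc d1).erase x).card + ((Df.erase d1).biUnion Nc).card := Finset.card_union_le _ _
        _ ≤ 3 + 4 * (Df.card - 1) := by rw [h1']; exact Nat.add_le_add_left h2' _
    have hpos : 1 ≤ Df.card := Finset.card_pos.mpr ⟨d1, h1⟩
    omega
  -- the unique dominator function
  have hdex : ∀ v : V, ∃ d, d ∈ Df ∧ v ∈ Nc d := by
    intro v; obtain ⟨d, h1, h2⟩ := hcov v; exact ⟨d, h1, h2⟩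
  choose dfun hdfun_mem hdfun_in using hdex
  have hdfun_uniq : ∀ v : V, ∀ d ∈ Df, v ∈ Nc d → d = dfun v := fun v d hd hv =>
    hkey d hd (dfun v) (hdfun_mem v) v hv (hdfun_in v)
  have hdfun_adj : ∀ v ∉ Df, G.Adj v (dfun v) := by
    intro v hv
    have h := hdfun_in v
    rw [hNcdef, Finset.mem_insert] at h
    rcases h with h | h
    · exact absurd (h ▸ hdfun_mem v) hv
    · exact ((G.mem_neighborFinset _ _).mp h).symm
  have huniq_nbr : ∀ v ∉ Df, ∀ d ∈ Df, G.Adj v d → d = dfun v := by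
    intro v _ d hd hadjvd
    exact hdfun_uniq v d hd (Finset.mem_insert_of_mem ((G.mem_neighborFinset _ _).mpr hadjvd.symm))
  have hindep : ∀ d1 ∈ Df, ∀ d2 ∈ Df, ¬ G.Adj d1 d2 := by
    intro d1 h1 d2 h2 hadj12
    have he : d1 = d2 := hkey d1 h1 d2 h2 d1 (Finset.mem_insert_self _ _)
      (Finset.mem_insert_of_mem ((G.mem_neighborFinset _ _).mpr hadj12.symm))
    exact G.loopless.irrefl d1 (he ▸ hadj12)
  -- neighbours outside Df
  set tset : V → Finset V := fun v => G.neighborFinset v \ Df with htsetdef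
  have htmem : ∀ v b : V, b ∈ tset v ↔ G.Adj v b ∧ b ∉ Df := by
    intro v b; simp [htsetdef, SimpleGraph.mem_neighborFinset]
  have htcard : ∀ v ∉ Df, (tset v).card = 2 := by
    intro v hv
    have hint : G.neighborFinset v ∩ Df = {dfun v} := by
      ext d
      simp only [Finset.mem_inter, SimpleGraph.mem_neighborFinset, Finset.mem_singleton]
      constructor
      · rintro ⟨hadjvd, hd⟩; exact (huniq_nbr v hv d hd hadjvd).symm ▸ rfl
      · rintro rfl; exact ⟨hdfun_adj v hv, hdfun_mem v⟩
    have hc := Finset.card_inter_add_card_sdiff (G.neighborFinset v) Df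
    rw [hint, Finset.card_singleton] at hc
    have hdeg : (G.neighborFinset v).card = 3 := by
      rw [G.card_neighborFinset_eq_degree]; exact hcubic v
    rw [hdeg] at hc
    have hr : (tset v).card = (G.neighborFinset v \ Df).card := rfl
    omega
  -- the two sides without Df
  set Af : Finset V := Finset.univ.filter (fun v => v ∈ A ∧ v ∉ Df) with hAfdef
  set Bf : Finset V := Finset.univ.filter (fun v => v ∈ B ∧ v ∉ Df) with hBfdef
  have hmemAf : ∀ v, v ∈ Af ↔ v ∈ A ∧ v ∉ Df := by intro v; simp [hAfdef]
  have hmemBf : ∀ v, v ∈ Bf ↔ v ∈ B ∧ v ∉ Df := by intro v; simp [hBfdef]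
  have htsubB : ∀ a ∈ A, tset a ⊆ Bf := by
    intro a ha b hb
    rw [htmem] at hb
    exact (hmemBf b).mpr ⟨hadjAB a b hb.1 ha, hb.2⟩
  have htsubA : ∀ b ∈ B, tset b ⊆ Af := by
    intro b hb a ha
    rw [htmem] at ha
    exact (hmemAf a).mpr ⟨hadjBA b a ha.1 hb, ha.2⟩
  have hbelow : ∀ b ∈ Bf, Af.filter (fun a => b ∈ tset a) = tset b := by
    intro b hb
    rw [hmemBf] at hb
    ext a
    simp only [Finset.mem_filter, htmem]
    constructor
    · rintro ⟨haAf, hadjab, _⟩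
      rw [hmemAf] at haAf
      exact ⟨hadjab.symm, haAf.2⟩
    · rintro ⟨hadjba, haD⟩
      exact ⟨(hmemAf a).mpr ⟨hadjBA b a hadjba hb.1, haD⟩, hadjba.symm, hb.2⟩
  have habove : ∀ a ∈ Af, Bf.filter (fun b => b ∈ tset a) = tset a := by
    intro a ha
    rw [hmemAf] at ha
    rw [Finset.filter_mem_eq_inter, Finset.inter_eq_right.mpr (htsubB a ha.1)]
  -- |Af| = |Bf|
  have hAfBf : Af.card = Bf.card := by
    have h1 : Af.card * 2 ≤ Bf.card * 2 := by
      apply Finset.card_mul_le_card_mul (fun a b => b ∈ tset a)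
      · intro a ha
        rw [Finset.bipartiteAbove, habove a ha, htcard a ((hmemAf a).mp ha).2]
      · intro b hb
        rw [Finset.bipartiteBelow, hbelow b hb, htcard b ((hmemBf b).mp hb).2]
    have h2 : Bf.card * 2 ≤ Af.card * 2 := by
      apply Finset.card_mul_le_card_mul (fun b a => b ∈ tset a)
      · intro b hb
        rw [Finset.bipartiteAbove, hbelow b hb, htcard b ((hmemBf b).mp hb).2]
      · intro a ha
        rw [Finset.bipartiteBelow, habove a ha, htcard a ((hmemAf a).mp ha).2]
    omega
  -- Hall's condition
  have hHall : ∀ s : Finset V, s ⊆ Af → s.card ≤ (s.biUnion tset).card := by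
    intro s hs
    have h1 : s.card * 2 ≤ (s.biUnion tset).card * 2 := by
      apply Finset.card_mul_le_card_mul (fun a b => b ∈ tset a)
      · intro a ha
        rw [Finset.bipartiteAbove, Finset.filter_mem_eq_inter,
          Finset.inter_eq_right.mpr (Finset.subset_biUnion_of_mem tset ha),
          htcard a ((hmemAf a).mp (hs ha)).2]
      · intro b hb
        obtain ⟨a0, ha0, hb0⟩ := Finset.mem_biUnion.mp hb
        have hbBf : b ∈ Bf := htsubB a0 ((hmemAf a0).mp (hs ha0)).1 hb0
        calc (Finset.bipartiteBelow (fun a b => b ∈ tset a) s b).card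
            ≤ (Finset.bipartiteBelow (fun a b => b ∈ tset a) Af b).card := by
              apply Finset.card_le_card
              rw [Finset.bipartiteBelow, Finset.bipartiteBelow]
              exact Finset.filter_subset_filter _ hs
          _ = 2 := by
              rw [Finset.bipartiteBelow, hbelow b hbBf, htcard b ((hmemBf b).mp hbBf).2]
    omega
  have hHall' : ∀ s : Finset ↥Af, s.card ≤ (s.biUnion (fun a => tset ↑a)).card := by
    intro s
    have hsub : s.image Subtype.val ⊆ Af := by
      intro x hx
      obtain ⟨a, _, rfl⟩ := Finset.mem_image.mp hx
      exact a.2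
    have hc : (s.image Subtype.val).card = s.card :=
      Finset.card_image_of_injective _ Subtype.val_injective
    have hb : (s.image Subtype.val).biUnion tset = s.biUnion (fun a => tset ↑a) :=
      Finset.image_biUnion
    calc s.card = (s.image Subtype.val).card := hc.symm
      _ ≤ ((s.image Subtype.val).biUnion tset).card := hHall _ hsub
      _ = _ := by rw [hb]
  obtain ⟨f, hfinj, hft⟩ :=
    (Finset.all_card_le_biUnion_card_iff_exists_injective (fun a : ↥Af => tset ↑a)).mp hHall'
  have hfB : ∀ a : ↥Af, f a ∈ Bf := fun a => htsubB ↑a ((hmemAf _).mp a.2).1 (hft a)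
  have himg : Finset.univ.image f = Bf := by
    apply Finset.eq_of_subset_of_card_le
    · intro b hb
      obtain ⟨a, _, rfl⟩ := Finset.mem_image.mp hb
      exact hfB a
    · rw [Finset.card_image_of_injective _ hfinj, Finset.card_univ, Fintype.card_coe]
      exact hAfBf.ge
  have hsurj : ∀ b ∈ Bf, ∃ a : ↥Af, f a = b := by
    intro b hb
    rw [← himg] at hb
    obtain ⟨a, _, rfl⟩ := Finset.mem_image.mp hb
    exact ⟨a, rfl⟩
  -- the second non-dominator neighbour
  have hgex : ∀ a : ↥Af, ∃ c, (tset ↑a).erase (f a) = {c} := by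
    intro a
    apply Finset.card_eq_one.mp
    rw [Finset.card_erase_of_mem (hft a), htcard ↑a ((hmemAf _).mp a.2).2]
  choose g hg using hgex
  have hgmem : ∀ a : ↥Af, g a ∈ tset ↑a :=
    fun a => Finset.mem_of_mem_erase (hg a ▸ Finset.mem_singleton_self (g a))
  have hgne : ∀ a : ↥Af, g a ≠ f a :=
    fun a => (Finset.mem_erase.mp (hg a ▸ Finset.mem_singleton_self (g a))).1
  have htwo : ∀ a : ↥Af, ∀ x ∈ tset ↑a, x = f a ∨ x = g a := by
    intro a x hx
    by_cases h : x = f a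
    · exact Or.inl h
    · right
      have hx' : x ∈ (tset ↑a).erase (f a) := Finset.mem_erase.mpr ⟨h, hx⟩
      rw [hg a] at hx'
      exact Finset.mem_singleton.mp hx'
  -- the copies
  set T : ↥Af → DoubleStarCopy V 3 :=
    fun a => ⟨↑a, f a, dfun (f a), ![g a, dfun ↑a]⟩ with hTdef
  have hTc : ∀ a : ↥Af, (T a).center = ↑a := fun a => rfl
  have hTinj : ∀ a a' : ↥Af, T a = T a' → a = a' := by
    intro a a' h
    exact Subtype.ext (congrArg DoubleStarCopy.center h)
  have hedges : ∀ (a : ↥Af) (e : Sym2 V), e ∈ (T a).edges ↔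
      e = s(↑a, f a) ∨ e = s(f a, dfun (f a)) ∨ e = s(↑a, g a) ∨ e = s(↑a, dfun ↑a) := by
    intro a e
    simp only [DoubleStarCopy.edges, Set.mem_insert_iff, Set.mem_range, hTdef]
    constructor
    · rintro (h | h | ⟨i, rfl⟩)
      · exact Or.inl h
      · exact Or.inr (Or.inl h)
      · fin_cases i
        · exact Or.inr (Or.inr (Or.inl (by simp)))
        · exact Or.inr (Or.inr (Or.inr (by simp)))
    · rintro (h | h | h | h)
      · exact Or.inl h
      · exact Or.inr (Or.inl h)
      · exact Or.inr (Or.inr ⟨(0 : Fin 2), by simp [h]⟩)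
      · exact Or.inr (Or.inr ⟨(1 : Fin 2), by simp [h]⟩)
  -- basic facts about a copy's vertices
  have hfacts : ∀ a : ↥Af,
      (↑a : V) ∈ A ∧ (↑a : V) ∉ Df ∧ f a ∈ B ∧ f a ∉ Df ∧ G.Adj ↑a (f a) ∧
      dfun (f a) ∈ Df ∧ dfun (f a) ∈ A ∧ G.Adj (f a) (dfun (f a)) ∧
      g a ∈ B ∧ g a ∉ Df ∧ G.Adj ↑a (g a) ∧
      dfun ↑a ∈ Df ∧ dfun ↑a ∈ B ∧ G.Adj ↑a (dfun ↑a) := by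
    intro a
    have haA : (↑a : V) ∈ A := ((hmemAf _).mp a.2).1
    have haD : (↑a : V) ∉ Df := ((hmemAf _).mp a.2).2
    have hf1 : G.Adj ↑a (f a) := ((htmem _ _).mp (hft a)).1
    have hf2 : f a ∉ Df := ((htmem _ _).mp (hft a)).2
    have hfB' : f a ∈ B := hadjAB _ _ hf1 haA
    have hdf1 : dfun (f a) ∈ Df := hdfun_mem _
    have hdf2 : G.Adj (f a) (dfun (f a)) := hdfun_adj _ hf2
    have hdf3 : dfun (f a) ∈ A := hadjBA _ _ hdf2 hfB'
    have hg1 : G.Adj ↑a (g a) := ((htmem _ _).mp (hgmem a)).1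
    have hg2 : g a ∉ Df := ((htmem _ _).mp (hgmem a)).2
    have hgB : g a ∈ B := hadjAB _ _ hg1 haA
    have hda1 : dfun ↑a ∈ Df := hdfun_mem _
    have hda2 : G.Adj ↑a (dfun ↑a) := hdfun_adj _ haD
    have hda3 : dfun ↑a ∈ B := hadjAB _ _ hda2 haA
    exact ⟨haA, haD, hfB', hf2, hf1, hdf1, hdf3, hdf2, hgB, hg2, hg1, hda1, hda3, hda2⟩
  have hABne : ∀ x ∈ A, ∀ y ∈ B, x ≠ y := fun x hx y hy hxy => hnAB x hx (hxy ▸ hy)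
  -- each T a is a genuine copy
  have hcopy : ∀ a : ↥Af, (T a).IsCopyIn G := by
    intro a
    obtain ⟨haA, haD, hfB', hfD, hafa, hdfD, hdfA, hfdf, hgB, hgD, haga, hdaD, hdaB, hada⟩ :=
      hfacts a
    constructor
    · have hlist : (T a).vertList = [↑a, f a, dfun (f a), g a, dfun ↑a] := by
        simp [DoubleStarCopy.vertList, hTdef, List.ofFn_succ]
      have n1 : (↑a : V) ≠ f a := hABne _ haA _ hfB'
      have n2 : (↑a : V) ≠ dfun (f a) := fun h => haD (by rw [h]; exact hdfD)
      have n3 : (↑a : V) ≠ g a := hABne _ haA _ hgB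
      have n4 : (↑a : V) ≠ dfun ↑a := fun h => haD (by rw [h]; exact hdaD)
      have n5 : f a ≠ dfun (f a) := fun h => hfD (by rw [h]; exact hdfD)
      have n6 : f a ≠ g a := fun h => hgne a h.symm
      have n7 : f a ≠ dfun ↑a := fun h => hfD (by rw [h]; exact hdaD)
      have n8 : dfun (f a) ≠ g a := hABne _ hdfA _ hgB
      have n9 : dfun (f a) ≠ dfun ↑a := hABne _ hdfA _ hdaB
      have n10 : g a ≠ dfun ↑a := fun h => hgD (by rw [h]; exact hdaD)
      rw [hlist]
      simp only [List.nodup_cons, List.mem_cons, List.mem_singleton, List.not_mem_nil,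
        or_false, List.nodup_nil, and_true, not_or]
      exact ⟨⟨n1, n2, n3, n4⟩, ⟨n5, n6, n7⟩, ⟨n8, n9⟩, n10, not_false⟩
    · intro e he
      rw [hedges a e] at he
      rcases he with rfl | rfl | rfl | rfl
      · exact hafa
      · exact hfdf
      · exact haga
      · exact hada
  -- main uniqueness-existence claim for oriented edges
  have main : ∀ u v : V, G.Adj u v → u ∈ A →
      ∃! t, t ∈ Set.range T ∧ s(u, v) ∈ t.edges := by
    intro u v huv huA
    have hvB : v ∈ B := hadjAB u v huv huA
    have hvnA : v ∉ A := fun h => hnAB v h hvB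
    by_cases huD : u ∈ Df
    · -- u is a dominator; v is the mid of a unique copy
      have hvD : v ∉ Df := fun hvDf => hindep u huD v hvDf huv
      have hvBf : v ∈ Bf := (hmemBf v).mpr ⟨hvB, hvD⟩
      have hu_eq : u = dfun v := huniq_nbr v hvD u huD huv.symm
      obtain ⟨a, hfa⟩ := hsurj v hvBf
      refine ⟨T a, ⟨⟨a, rfl⟩, ?_⟩, ?_⟩
      · rw [hedges]
        exact Or.inr (Or.inl (by rw [hfa, ← hu_eq]; exact Sym2.eq_swap))
      · rintro t ⟨⟨a', rfl⟩, he⟩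
        obtain ⟨ha'A, ha'D, hf'B, hf'D, _, hdf'D, hdf'A, _, hg'B, hg'D, _, hda'D, hda'B, _⟩ :=
          hfacts a'
        rw [hedges, Sym2.eq_iff, Sym2.eq_iff, Sym2.eq_iff, Sym2.eq_iff] at he
        have ha'a : a' = a := by
          rcases he with (⟨h1, h2⟩ | ⟨h1, h2⟩) | (⟨h1, h2⟩ | ⟨h1, h2⟩) | (⟨h1, h2⟩ | ⟨h1, h2⟩) |
            (⟨h1, h2⟩ | ⟨h1, h2⟩)
          · exact absurd (h1 ▸ huD) ha'D
          · exact absurd (h1 ▸ huD) hf'D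
          · exact absurd (h1 ▸ huD) hf'D
          · exact hfinj (h2.symm.trans hfa.symm)
          · exact absurd (h1 ▸ huD) ha'D
          · exact absurd (h1 ▸ huD) hg'D
          · exact absurd (h1 ▸ huD) ha'D
          · exact absurd hda'B (hnAB _ (h1 ▸ huA))
        rw [ha'a]
    · by_cases hvD : v ∈ Df
      · -- v is the dominator of u
        have huAf : u ∈ Af := (hmemAf u).mpr ⟨huA, huD⟩
        have hv_eq : v = dfun u := huniq_nbr u huD v hvD huv
        refine ⟨T ⟨u, huAf⟩, ⟨⟨⟨u, huAf⟩, rfl⟩, ?_⟩, ?_⟩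
        · rw [hedges]
          exact Or.inr (Or.inr (Or.inr (by rw [hv_eq])))
        · rintro t ⟨⟨a', rfl⟩, he⟩
          obtain ⟨ha'A, ha'D, hf'B, hf'D, _, hdf'D, hdf'A, _, hg'B, hg'D, _, hda'D, hda'B, _⟩ :=
            hfacts a'
          rw [hedges, Sym2.eq_iff, Sym2.eq_iff, Sym2.eq_iff, Sym2.eq_iff] at he
          have ha'u : (↑a' : V) = u := by
            rcases he with (⟨h1, h2⟩ | ⟨h1, h2⟩) | (⟨h1, h2⟩ | ⟨h1, h2⟩) | (⟨h1, h2⟩ | ⟨h1, h2⟩) |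
              (⟨h1, h2⟩ | ⟨h1, h2⟩)
            · exact absurd (h2 ▸ hvD) hf'D
            · exact absurd (h2 ▸ hvD) ha'D
            · exact absurd hf'B (hnAB _ (h1 ▸ huA))
            · exact absurd (h2 ▸ hvD) hf'D
            · exact absurd (h2 ▸ hvD) hg'D
            · exact absurd (h2 ▸ hvD) ha'D
            · exact h1.symm
            · exact absurd (h2 ▸ hvD) ha'D
          have : a' = ⟨u, huAf⟩ := Subtype.ext ha'u
          rw [this]
      · -- both u and v avoid Df
        have huAf : u ∈ Af := (hmemAf u).mpr ⟨huA, huD⟩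
        set a : ↥Af := ⟨u, huAf⟩ with hadef
        have hvts : v ∈ tset u := (htmem u v).mpr ⟨huv, hvD⟩
        refine ⟨T a, ⟨⟨a, rfl⟩, ?_⟩, ?_⟩
        · rw [hedges]
          rcases htwo a v hvts with h | h
          · exact Or.inl (by rw [h])
          · exact Or.inr (Or.inr (Or.inl (by rw [h])))
        · rintro t ⟨⟨a', rfl⟩, he⟩
          obtain ⟨ha'A, ha'D, hf'B, hf'D, _, hdf'D, hdf'A, _, hg'B, hg'D, _, hda'D, hda'B, _⟩ :=
            hfacts a'
          rw [hedges, Sym2.eq_iff, Sym2.eq_iff, Sym2.eq_iff, Sym2.eq_iff] at he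
          have ha'u : (↑a' : V) = u := by
            rcases he with (⟨h1, h2⟩ | ⟨h1, h2⟩) | (⟨h1, h2⟩ | ⟨h1, h2⟩) | (⟨h1, h2⟩ | ⟨h1, h2⟩) |
              (⟨h1, h2⟩ | ⟨h1, h2⟩)
            · exact h1.symm
            · exact absurd hf'B (hnAB _ (h1 ▸ huA))
            · exact absurd hf'B (hnAB _ (h1 ▸ huA))
            · exact absurd (h1.symm ▸ hdf'D) huD
            · exact h1.symm
            · exact absurd hg'B (hnAB _ (h1 ▸ huA))
            · exact h1.symm
            · exact absurd (h1.symm ▸ hda'D) huD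
          have : a' = a := Subtype.ext ha'u
          rw [this]
  -- assemble the decomposition
  refine ⟨Set.range T, ?_, ?_⟩
  · rintro t ⟨a, rfl⟩
    exact hcopy a
  · intro e he
    induction e with
    | _ u v =>
      have huv : G.Adj u v := (SimpleGraph.mem_edgeSet G).mp he
      rcases hAB u with hu | hu
      · exact main u v huv hu
      · have hv : v ∈ A := hadjBA u v huv hu
        rw [show s(u, v) = s(v, u) from Sym2.eq_swap]
        exact main v u huv.symm hv
end

section
/- Let G be a cubic (3-regular) bipartite simple graph of order n with bipartition (A, B), and let S ⊆ A be a subset of size 3n/8. Then G is (S_{1,2}, S)-decomposable if and only if the bipartite subgraph of G induced between S and N(A∖S) has a perfect matching (a matching saturating both S and N(A∖S)). -/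
open SimpleGraph

variable {V : Type*}

section St10Helpers

open Finset

variable {V : Type*} [Fintype V] {G : SimpleGraph V} [DecidableRel G.Adj] {A B S : Set V}

set_option linter.unusedSectionVars false

private lemma st10_mem_edges3 {t : DoubleStarCopy V 3} {e : Sym2 V} :
    e ∈ t.edges ↔ e = s(t.center, t.mid) ∨ e = s(t.mid, t.pend) ∨
      ∃ i : Fin 2, e = s(t.center, t.leaf i) := by
  simp only [DoubleStarCopy.edges, Set.mem_insert_iff, Set.mem_range]
  constructor
  · rintro (h | h | ⟨i, rfl⟩)
    · exact .inl h
    · exact .inr (.inl h)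
    · exact .inr (.inr ⟨i, rfl⟩)
  · rintro (h | h | ⟨i, rfl⟩)
    · exact .inl h
    · exact .inr (.inl h)
    · exact .inr (.inr ⟨i, rfl⟩)

private lemma st10_nodup_facts {t : DoubleStarCopy V 3} (h : t.vertList.Nodup) :
    t.center ≠ t.mid ∧ t.center ≠ t.pend ∧ t.mid ≠ t.pend ∧
    (∀ i, t.center ≠ t.leaf i) ∧ (∀ i, t.mid ≠ t.leaf i) ∧ (∀ i, t.pend ≠ t.leaf i) ∧
    t.leaf 0 ≠ t.leaf 1 := by
  simp only [DoubleStarCopy.vertList, List.nodup_cons, List.mem_cons, List.mem_ofFn,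
    Set.mem_range, List.nodup_ofFn] at h
  push_neg at h
  obtain ⟨⟨h1, h2, h3⟩, ⟨h4, h5⟩, h6, h7⟩ := h
  refine ⟨h1, h2, h4, ?_, ?_, ?_, ?_⟩
  · intro i hi; exact h3 i hi.symm
  · intro i hi; exact h5 i hi.symm
  · intro i hi; exact h6 i hi.symm
  · intro hxy; exact absurd (h7.eq_iff.mp hxy) (by decide)

private lemma st10_memB (hbip : IsBipartitionOf G A B) {u v : V} (h : G.Adj u v)
    (hu : u ∈ A) : v ∈ B :=
  (hbip.2.2 h).mp hu

private lemma st10_memA (hbip : IsBipartitionOf G A B) {u v : V} (h : G.Adj u v)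
    (hv : v ∈ B) : u ∈ A :=
  (hbip.2.2 h).mpr hv

private lemma st10_notB (hbip : IsBipartitionOf G A B) {u : V} (hu : u ∈ A) : u ∉ B :=
  fun hB => Set.disjoint_left.mp hbip.2.1 hu hB

private lemma st10_copy_adj {t : DoubleStarCopy V 3} (ht : t.IsCopyIn G) :
    G.Adj t.center t.mid ∧ G.Adj t.mid t.pend ∧ ∀ i, G.Adj t.center (t.leaf i) :=
  ⟨G.mem_edgeSet.mp (ht.2 (Set.mem_insert _ _)),
   G.mem_edgeSet.mp (ht.2 (Set.mem_insert_iff.mpr (.inr (Set.mem_insert _ _)))),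
   fun i => G.mem_edgeSet.mp
     (ht.2 (Set.mem_insert_iff.mpr (.inr (Set.mem_insert_iff.mpr (.inr ⟨i, rfl⟩)))))⟩

private lemma st10_sum_nbr (hcubic : G.IsRegularOfDegree 3) (s : Finset V) :
    ∑ a ∈ s, (G.neighborFinset a).card = 3 * s.card := by
  have h : ∀ a ∈ s, (G.neighborFinset a).card = 3 := fun a _ => hcubic a
  rw [Finset.sum_congr rfl h, Finset.sum_const, smul_eq_mul, mul_comm]

private lemma st10_nbrs_eq (hcubic : G.IsRegularOfDegree 3) {t : DoubleStarCopy V 3}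
    (ht : t.IsCopyIn G) :
    ∀ w, G.Adj t.center w → w = t.mid ∨ w = t.leaf 0 ∨ w = t.leaf 1 := by
  classical
  obtain ⟨hcm, hcp, hmp, hcl, hml, hpl, hll⟩ := st10_nodup_facts ht.1
  obtain ⟨hadjm, hadjp, hadjl⟩ := st10_copy_adj ht
  have hsub : ({t.mid, t.leaf 0, t.leaf 1} : Finset V) ⊆ G.neighborFinset t.center := by
    intro w hw
    simp only [Finset.mem_insert, Finset.mem_singleton] at hw
    rcases hw with rfl | rfl | rfl
    · exact (G.mem_neighborFinset _ _).mpr hadjm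
    · exact (G.mem_neighborFinset _ _).mpr (hadjl 0)
    · exact (G.mem_neighborFinset _ _).mpr (hadjl 1)
  have hcard : ({t.mid, t.leaf 0, t.leaf 1} : Finset V).card = 3 := by
    rw [Finset.card_insert_of_notMem (by simp [hml 0, hml 1]),
      Finset.card_insert_of_notMem (by simp [hll]), Finset.card_singleton]
  have heq : ({t.mid, t.leaf 0, t.leaf 1} : Finset V) = G.neighborFinset t.center := by
    apply Finset.eq_of_subset_of_card_le hsub
    rw [hcard]
    exact le_of_eq (hcubic t.center)
  intro w hw
  have : w ∈ ({t.mid, t.leaf 0, t.leaf 1} : Finset V) :=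
    heq ▸ (G.mem_neighborFinset _ _).mpr hw
  simpa using this

private lemma st10_cardAB (hbip : IsBipartitionOf G A B) (hcubic : G.IsRegularOfDegree 3) :
    A.ncard = B.ncard := by
  classical
  rw [Set.ncard_eq_toFinset_card A A.toFinite, Set.ncard_eq_toFinset_card B B.toFinite]
  set sA := A.toFinite.toFinset
  set sB := B.toFinite.toFinset
  have key : (sA.sigma fun a => G.neighborFinset a).card
      = (sB.sigma fun b => G.neighborFinset b).card := by
    apply Finset.card_bij' (fun p _ => (⟨p.2, p.1⟩ : Σ _ : V, V))
      (fun p _ => (⟨p.2, p.1⟩ : Σ _ : V, V))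
    · rintro ⟨a, b⟩ hp
      simp only [Finset.mem_sigma, Set.Finite.mem_toFinset, SimpleGraph.mem_neighborFinset,
        sA, sB] at hp ⊢
      exact ⟨st10_memB hbip hp.2 hp.1, hp.2.symm⟩
    · rintro ⟨b, a⟩ hp
      simp only [Finset.mem_sigma, Set.Finite.mem_toFinset, SimpleGraph.mem_neighborFinset,
        sA, sB] at hp ⊢
      exact ⟨st10_memA hbip hp.2.symm hp.1, hp.2.symm⟩
    · rintro ⟨a, b⟩ _; rfl
    · rintro ⟨b, a⟩ _; rfl
  rw [Finset.card_sigma, Finset.card_sigma, st10_sum_nbr hcubic, st10_sum_nbr hcubic] at key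
  omega

private lemma st10_nbhd_card_le (hcubic : G.IsRegularOfDegree 3) (X : Set V) :
    (nbhd G X).ncard ≤ 3 * X.ncard := by
  classical
  rw [Set.ncard_eq_toFinset_card _ (nbhd G X).toFinite, Set.ncard_eq_toFinset_card X X.toFinite]
  have hsub : (nbhd G X).toFinite.toFinset ⊆ X.toFinite.toFinset.biUnion
      (fun x => G.neighborFinset x) := by
    intro v hv
    rw [Set.Finite.mem_toFinset] at hv
    obtain ⟨x, hx, hadj⟩ := hv
    exact Finset.mem_biUnion.mpr ⟨x, (Set.Finite.mem_toFinset _).mpr hx,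
      (G.mem_neighborFinset _ _).mpr hadj⟩
  calc (nbhd G X).toFinite.toFinset.card
      ≤ (X.toFinite.toFinset.biUnion fun x => G.neighborFinset x).card :=
        Finset.card_le_card hsub
    _ ≤ ∑ x ∈ X.toFinite.toFinset, (G.neighborFinset x).card := Finset.card_biUnion_le
    _ = 3 * X.toFinite.toFinset.card := st10_sum_nbr hcubic _

private lemma st10_nbhd_subB (hbip : IsBipartitionOf G A B) {X : Set V} (hX : X ⊆ A) :
    nbhd G X ⊆ B := by
  rintro v ⟨x, hx, hadj⟩
  exact st10_memB hbip hadj (hX hx)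

private lemma st10_unique_pend (hbip : IsBipartitionOf G A B)
    (hcubic : G.IsRegularOfDegree 3) (hSA : S ⊆ A)
    (hS3 : 3 * (A \ S).ncard = S.ncard)
    (hmcard : (nbhd G (A \ S)).ncard = S.ncard) :
    ∀ b ∈ nbhd G (A \ S), ∃! a, a ∈ A \ S ∧ G.Adj b a := by
  classical
  set X := A \ S with hX
  set T := X.toFinite.toFinset with hT
  set Nb := (nbhd G X).toFinite.toFinset with hNb
  have hTX : ∀ a, a ∈ T ↔ a ∈ X := fun a => Set.Finite.mem_toFinset _
  have hNbX : ∀ b, b ∈ Nb ↔ b ∈ nbhd G X := fun b => Set.Finite.mem_toFinset _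
  have key : ∑ b ∈ Nb, (T.filter (G.Adj b ·)).card = 3 * T.card := by
    rw [← st10_sum_nbr hcubic T, ← Finset.card_sigma, ← Finset.card_sigma]
    apply Finset.card_bij' (fun p _ => (⟨p.2, p.1⟩ : Σ _ : V, V))
      (fun p _ => (⟨p.2, p.1⟩ : Σ _ : V, V))
    · rintro ⟨b, a⟩ hp
      simp only [Finset.mem_sigma, Finset.mem_filter, SimpleGraph.mem_neighborFinset] at hp ⊢
      exact ⟨hp.2.1, hp.2.2.symm⟩
    · rintro ⟨a, b⟩ hp
      simp only [Finset.mem_sigma, Finset.mem_filter, SimpleGraph.mem_neighborFinset] at hp ⊢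
      have haX : a ∈ X := (hTX a).mp hp.1
      exact ⟨(hNbX b).mpr ⟨a, haX, hp.2⟩, hp.1, hp.2.symm⟩
    · rintro ⟨b, a⟩ _; rfl
    · rintro ⟨a, b⟩ _; rfl
  have hNbcard : Nb.card = 3 * T.card := by
    have h1 : Nb.card = (nbhd G X).ncard := (Set.ncard_eq_toFinset_card _ _).symm
    have h2 : T.card = X.ncard := (Set.ncard_eq_toFinset_card _ _).symm
    omega
  have hone : ∀ b ∈ Nb, 1 ≤ (T.filter (G.Adj b ·)).card := by
    intro b hb
    obtain ⟨a, haX, hadj⟩ := (hNbX b).mp hb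
    exact Finset.card_pos.mpr ⟨a, Finset.mem_filter.mpr ⟨(hTX a).mpr haX, hadj.symm⟩⟩
  have hexact : ∀ b ∈ Nb, (T.filter (G.Adj b ·)).card = 1 := by
    by_contra hcon
    push_neg at hcon
    obtain ⟨b, hb, hne⟩ := hcon
    have hlt : ∑ _b ∈ Nb, 1 < ∑ b ∈ Nb, (T.filter (G.Adj b ·)).card :=
      Finset.sum_lt_sum hone ⟨b, hb, lt_of_le_of_ne (hone b hb) (Ne.symm hne)⟩
    rw [Finset.sum_const, smul_eq_mul, mul_one, key] at hlt
    omega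
  intro b hbX
  obtain ⟨a, ha⟩ := Finset.card_eq_one.mp (hexact b ((hNbX b).mpr hbX))
  have hamem : a ∈ T.filter (G.Adj b ·) := ha ▸ Finset.mem_singleton_self a
  rw [Finset.mem_filter] at hamem
  refine ⟨a, ⟨(hTX a).mp hamem.1, hamem.2⟩, ?_⟩
  intro a' ⟨ha'X, hadj'⟩
  have hmem' : a' ∈ T.filter (G.Adj b ·) := Finset.mem_filter.mpr ⟨(hTX a').mpr ha'X, hadj'⟩
  simpa [ha] using hmem' 

private lemma st10_forward (hcubic : G.IsRegularOfDegree 3) (hbip : IsBipartitionOf G A B)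
    (hSA : S ⊆ A) (hSineq : (nbhd G (A \ S)).ncard ≤ S.ncard)
    (hdec : IsDSSDecomposable G 3 S) :
    ∃ m : ↥S ≃ ↥(nbhd G (A \ S)), ∀ s : ↥S, G.Adj ↑s ↑(m s) := by
  classical
  obtain ⟨𝒟, ⟨hcopy, huniq⟩, hcen⟩ := hdec
  have huni : ∀ t t' (e : Sym2 V), t ∈ 𝒟 → t' ∈ 𝒟 → e ∈ t.edges → e ∈ t'.edges → t = t' := by
    intro t t' e ht ht' het het'
    obtain ⟨u, -, hval⟩ := huniq e ((hcopy t ht).2 het)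
    rw [hval t ⟨ht, het⟩, hval t' ⟨ht', het'⟩]
  have hex : ∀ s : ↥S, ∃ t, t ∈ 𝒟 ∧ t.center = ↑s := by
    intro s
    have hs : (s : V) ∈ {v | ∃ t ∈ 𝒟, t.center = v} := hcen ▸ s.2
    obtain ⟨t, ht, htc⟩ := hs
    exact ⟨t, ht, htc⟩
  choose T hT𝒟 hTc using hex
  have hedge_in : ∀ (s : ↥S) (w : V), G.Adj ↑s w → s(↑s, w) ∈ (T s).edges := by
    intro s w hw
    have hw' : G.Adj (T s).center w := by rw [hTc s]; exact hw
    rcases st10_nbrs_eq hcubic (hcopy _ (hT𝒟 s)) w hw' with rfl | rfl | rfl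
    · exact st10_mem_edges3.mpr (.inl (by rw [hTc s]))
    · exact st10_mem_edges3.mpr (.inr (.inr ⟨0, by rw [hTc s]⟩))
    · exact st10_mem_edges3.mpr (.inr (.inr ⟨1, by rw [hTc s]⟩))
  have hadjTs : ∀ s : ↥S, G.Adj ↑s (T s).mid := by
    intro s
    have h := (st10_copy_adj (hcopy _ (hT𝒟 s))).1
    rwa [hTc s] at h
  have hmidB : ∀ s : ↥S, (T s).mid ∈ B := fun s => st10_memB hbip (hadjTs s) (hSA s.2)
  have hadjmp : ∀ s : ↥S, G.Adj (T s).mid (T s).pend :=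
    fun s => (st10_copy_adj (hcopy _ (hT𝒟 s))).2.1
  have hpendA : ∀ s : ↥S, (T s).pend ∈ A :=
    fun s => st10_memA hbip (hadjmp s).symm (hmidB s)
  have hpendS : ∀ s : ↥S, (T s).pend ∉ S := by
    intro s hps
    set p : ↥S := ⟨(T s).pend, hps⟩ with hp
    have h1 : s((T s).mid, (T s).pend) ∈ (T s).edges := st10_mem_edges3.mpr (.inr (.inl rfl))
    have h2 : s((↑p : V), (T s).mid) ∈ (T p).edges := hedge_in p _ (hadjmp s).symm
    have h2' : s((T s).mid, (T s).pend) ∈ (T p).edges := by rwa [Sym2.eq_swap] at h2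
    have heq := huni _ _ _ (hT𝒟 s) (hT𝒟 p) h1 h2'
    have hcc : (↑s : V) = ↑p := by rw [← hTc s, ← hTc p, heq]
    exact (st10_nodup_facts (hcopy _ (hT𝒟 s)).1).2.1 ((hTc s).trans hcc)
  have hmid_nbhd : ∀ s : ↥S, (T s).mid ∈ nbhd G (A \ S) := fun s =>
    ⟨(T s).pend, ⟨hpendA s, hpendS s⟩, (hadjmp s).symm⟩
  set f : ↥S → ↥(nbhd G (A \ S)) := fun s => ⟨(T s).mid, hmid_nbhd s⟩ with hf
  have hinj : Function.Injective f := by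
    intro s s' hss
    have hmm : (T s).mid = (T s').mid := congrArg Subtype.val hss
    by_contra hne
    have hne' : (↑s : V) ≠ ↑s' := fun h => hne (Subtype.ext h)
    by_cases hpp : (T s).pend = (T s').pend
    · have h1 : s((T s).mid, (T s).pend) ∈ (T s).edges := st10_mem_edges3.mpr (.inr (.inl rfl))
      have h2 : s((T s).mid, (T s).pend) ∈ (T s').edges := by
        rw [hmm, hpp]; exact st10_mem_edges3.mpr (.inr (.inl rfl))
      have heq := huni _ _ _ (hT𝒟 s) (hT𝒟 s') h1 h2
      exact hne' (by rw [← hTc s, heq, hTc s'])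
    · have n13 : (↑s : V) ≠ (T s).pend := fun h => hpendS s (h ▸ s.2)
      have n14 : (↑s : V) ≠ (T s').pend := fun h => hpendS s' (h ▸ s.2)
      have n23 : (↑s' : V) ≠ (T s).pend := fun h => hpendS s (h ▸ s'.2)
      have n24 : (↑s' : V) ≠ (T s').pend := fun h => hpendS s' (h ▸ s'.2)
      have hsub4 : ({↑s, ↑s', (T s).pend, (T s').pend} : Finset V) ⊆
          G.neighborFinset (T s).mid := by
        intro w hw
        simp only [Finset.mem_insert, Finset.mem_singleton] at hw
        rcases hw with rfl | rfl | rfl | rfl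
        · exact (G.mem_neighborFinset _ _).mpr (hadjTs s).symm
        · exact (G.mem_neighborFinset _ _).mpr (by rw [hmm]; exact (hadjTs s').symm)
        · exact (G.mem_neighborFinset _ _).mpr (hadjmp s)
        · exact (G.mem_neighborFinset _ _).mpr (by rw [hmm]; exact hadjmp s')
      have hc4 : ({↑s, ↑s', (T s).pend, (T s').pend} : Finset V).card = 4 := by
        rw [Finset.card_insert_of_notMem (by simp [hne', n13, n14]),
          Finset.card_insert_of_notMem (by simp [n23, n24]),
          Finset.card_insert_of_notMem (by simp [hpp]), Finset.card_singleton]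
      have hle := Finset.card_le_card hsub4
      have hdb : (G.neighborFinset (T s).mid).card = 3 := hcubic (T s).mid
      rw [hc4, hdb] at hle
      omega
  have h1 := Nat.card_coe_set_eq S
  have h2 := Nat.card_coe_set_eq (nbhd G (A \ S))
  have hcle : Nat.card ↥S ≤ Nat.card ↥(nbhd G (A \ S)) := Nat.card_le_card_of_injective f hinj
  have hbij : Function.Bijective f :=
    (Nat.bijective_iff_injective_and_card f).mpr ⟨hinj, by omega⟩
  exact ⟨Equiv.ofBijective f hbij, fun s => hadjTs s⟩

private lemma st10_backward (hcubic : G.IsRegularOfDegree 3) (hbip : IsBipartitionOf G A B)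
    (hSA : S ⊆ A)
    (hpend : ∀ b ∈ nbhd G (A \ S), ∃! a, a ∈ A \ S ∧ G.Adj b a)
    (m : ↥S ≃ ↥(nbhd G (A \ S))) (hm : ∀ s : ↥S, G.Adj ↑s ↑(m s)) :
    IsDSSDecomposable G 3 S := by
  classical
  have hnbB : nbhd G (A \ S) ⊆ B := st10_nbhd_subB hbip Set.diff_subset
  have hABdisj : ∀ {w : V}, w ∈ A → w ∈ B → False := fun hA hB => st10_notB hbip hA hB
  -- choose pendant vertices
  have hpend' : ∀ b : ↥(nbhd G (A \ S)), ∃ a, (a ∈ A \ S ∧ G.Adj ↑b a) ∧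
      ∀ a', a' ∈ A \ S ∧ G.Adj (↑b : V) a' → a' = a := by
    intro b
    obtain ⟨a, ha, hu⟩ := hpend ↑b b.2
    exact ⟨a, ha, hu⟩
  choose pnd hpnd hpnd_uniq using hpend'
  -- choose the two leaves
  have hleaf : ∀ s : ↥S, ∃ x y : V, x ≠ y ∧
      (G.neighborFinset ↑s).erase ↑(m s) = {x, y} := by
    intro s
    have hmem : (↑(m s) : V) ∈ G.neighborFinset ↑s := (G.mem_neighborFinset _ _).mpr (hm s)
    have hdeg : (G.neighborFinset (↑s : V)).card = 3 := hcubic ↑s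
    have hcard2 : ((G.neighborFinset (↑s : V)).erase ↑(m s)).card = 2 := by
      rw [Finset.card_erase_of_mem hmem, hdeg]
    exact Finset.card_eq_two.mp hcard2
  choose lx ly hlxy hlerase using hleaf
  set F : ↥S → DoubleStarCopy V 3 := fun s =>
    ⟨↑s, ↑(m s), pnd (m s), fun i => if (i : ℕ) = 0 then lx s else ly s⟩ with hFdef
  have hFc : ∀ s, (F s).center = ↑s := fun s => rfl
  have hFm : ∀ s, (F s).mid = ↑(m s) := fun s => rfl
  have hFp : ∀ s, (F s).pend = pnd (m s) := fun s => rfl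
  have hl0 : ∀ s, (F s).leaf 0 = lx s := fun s => rfl
  have hl1 : ∀ s, (F s).leaf 1 = ly s := fun s => rfl
  have hleaf_mem : ∀ (s : ↥S) (i : Fin 2), (F s).leaf i = lx s ∨ (F s).leaf i = ly s := by
    intro s i
    by_cases h : (i : ℕ) = 0
    · left; exact if_pos h
    · right; exact if_neg h
  have hlx : ∀ s : ↥S, lx s ≠ (↑(m s) : V) ∧ G.Adj ↑s (lx s) := by
    intro s
    have h : lx s ∈ (G.neighborFinset (↑s : V)).erase ↑(m s) := by
      rw [hlerase s]; simp
    rw [Finset.mem_erase, G.mem_neighborFinset] at h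
    exact h
  have hly : ∀ s : ↥S, ly s ≠ (↑(m s) : V) ∧ G.Adj ↑s (ly s) := by
    intro s
    have h : ly s ∈ (G.neighborFinset (↑s : V)).erase ↑(m s) := by
      rw [hlerase s]; simp
    rw [Finset.mem_erase, G.mem_neighborFinset] at h
    exact h
  have hcov : ∀ (s : ↥S) (w : V), G.Adj ↑s w → w = ↑(m s) ∨ w = lx s ∨ w = ly s := by
    intro s w hw
    by_cases h : w = ↑(m s)
    · exact .inl h
    · have hmem : w ∈ (G.neighborFinset (↑s : V)).erase ↑(m s) :=
        Finset.mem_erase.mpr ⟨h, (G.mem_neighborFinset _ _).mpr hw⟩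
      rw [hlerase s] at hmem
      simpa using (Or.inr (by simpa using hmem))
  have hFe : ∀ (s : ↥S) (e : Sym2 V), e ∈ (F s).edges ↔
      e = s((↑s : V), ↑(m s)) ∨ e = s((↑(m s) : V), pnd (m s)) ∨
      e = s((↑s : V), lx s) ∨ e = s((↑s : V), ly s) := by
    intro s e
    rw [st10_mem_edges3, hFc, hFm, hFp]
    constructor
    · rintro (h | h | ⟨i, h⟩)
      · exact .inl h
      · exact .inr (.inl h)
      · rcases hleaf_mem s i with hl | hl
        · exact .inr (.inr (.inl (by rw [h, hl])))
        · exact .inr (.inr (.inr (by rw [h, hl])))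
    · rintro (h | h | h | h)
      · exact .inl h
      · exact .inr (.inl h)
      · exact .inr (.inr ⟨0, by rw [h, hl0 s]⟩)
      · exact .inr (.inr ⟨1, by rw [h, hl1 s]⟩)
  have hcopyF : ∀ s : ↥S, (F s).IsCopyIn G := by
    intro s
    obtain ⟨⟨hpA, hpS⟩, hpadj⟩ := hpnd (m s)
    have hxB : lx s ∈ B := st10_memB hbip (hlx s).2 (hSA s.2)
    have hyB : ly s ∈ B := st10_memB hbip (hly s).2 (hSA s.2)
    have hmB : (↑(m s) : V) ∈ B := hnbB (m s).2
    have hsA : (↑s : V) ∈ A := hSA s.2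
    constructor
    · have hvl : (F s).vertList = [↑s, ↑(m s), pnd (m s), lx s, ly s] := rfl
      rw [hvl]
      have d1 : (↑s : V) ≠ ↑(m s) := fun h => hABdisj hsA (h ▸ hmB)
      have d2 : (↑s : V) ≠ pnd (m s) := fun h => hpS (h ▸ s.2)
      have d3 : (↑s : V) ≠ lx s := fun h => hABdisj hsA (h ▸ hxB)
      have d4 : (↑s : V) ≠ ly s := fun h => hABdisj hsA (h ▸ hyB)
      have d5 : (↑(m s) : V) ≠ pnd (m s) := fun h => hABdisj hpA (h ▸ hmB)
      have d6 : (↑(m s) : V) ≠ lx s := fun h => (hlx s).1 h.symm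
      have d7 : (↑(m s) : V) ≠ ly s := fun h => (hly s).1 h.symm
      have d8 : pnd (m s) ≠ lx s := fun h => hABdisj hpA (by rw [h]; exact hxB)
      have d9 : pnd (m s) ≠ ly s := fun h => hABdisj hpA (by rw [h]; exact hyB)
      simp [d1, d2, d3, d4, d5, d6, d7, d8, d9, hlxy s]
    · intro e he
      rcases (hFe s e).mp he with rfl | rfl | rfl | rfl
      · exact G.mem_edgeSet.mpr (hm s)
      · exact G.mem_edgeSet.mpr hpadj
      · exact G.mem_edgeSet.mpr (hlx s).2
      · exact G.mem_edgeSet.mpr (hly s).2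
  refine ⟨Set.range F, ⟨?_, ?_⟩, ?_⟩
  · rintro t ⟨s, rfl⟩; exact hcopyF s
  · have main : ∀ u v : V, G.Adj u v → u ∈ A →
        ∃! t, t ∈ Set.range F ∧ s(u, v) ∈ t.edges := by
      intro u v huv huA
      have hvB : v ∈ B := st10_memB hbip huv huA
      have hvS : v ∉ S := fun h => hABdisj (hSA h) hvB
      by_cases huS : u ∈ S
      · refine ⟨F ⟨u, huS⟩, ⟨⟨⟨u, huS⟩, rfl⟩, ?_⟩, ?_⟩
        · rcases hcov ⟨u, huS⟩ v huv with h | h | h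
          · exact (hFe _ _).mpr (.inl (by rw [h]))
          · exact (hFe _ _).mpr (.inr (.inr (.inl (by rw [h]))))
          · exact (hFe _ _).mpr (.inr (.inr (.inr (by rw [h]))))
        · rintro t ⟨⟨s', rfl⟩, het⟩
          have hs'u : (↑s' : V) = u := by
            rcases (hFe s' _).mp het with h | h | h | h
            · rcases Sym2.eq_iff.mp h with ⟨h1, h2⟩ | ⟨h1, h2⟩
              · exact h1.symm
              · exact absurd (by rw [h2]; exact s'.2 : v ∈ S) hvS
            · rcases Sym2.eq_iff.mp h with ⟨h1, h2⟩ | ⟨h1, h2⟩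
              · exact absurd (by rw [h1]; exact hnbB (m s').2 : u ∈ B) (st10_notB hbip huA)
              · exact absurd huS (by rw [h1]; exact (hpnd (m s')).1.2)
            · rcases Sym2.eq_iff.mp h with ⟨h1, h2⟩ | ⟨h1, h2⟩
              · exact h1.symm
              · exact absurd (by rw [h2]; exact s'.2 : v ∈ S) hvS
            · rcases Sym2.eq_iff.mp h with ⟨h1, h2⟩ | ⟨h1, h2⟩
              · exact h1.symm
              · exact absurd (by rw [h2]; exact s'.2 : v ∈ S) hvS
          rw [show s' = (⟨u, huS⟩ : ↥S) from Subtype.ext hs'u]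
      · have hunb : v ∈ nbhd G (A \ S) := ⟨u, ⟨huA, huS⟩, huv⟩
        have hmsv : (↑(m (m.symm ⟨v, hunb⟩)) : V) = v := by rw [Equiv.apply_symm_apply]
        have hpndv : pnd (m (m.symm ⟨v, hunb⟩)) = u :=
          (hpnd_uniq (m (m.symm ⟨v, hunb⟩)) u ⟨⟨huA, huS⟩, by rw [hmsv]; exact huv.symm⟩).symm
        refine ⟨F (m.symm ⟨v, hunb⟩), ⟨⟨m.symm ⟨v, hunb⟩, rfl⟩, ?_⟩, ?_⟩
        · refine (hFe _ _).mpr (.inr (.inl ?_))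
          rw [hmsv, hpndv, Sym2.eq_swap]
        · rintro t ⟨⟨s', rfl⟩, het⟩
          have hs' : s' = m.symm ⟨v, hunb⟩ := by
            rcases (hFe s' _).mp het with h | h | h | h
            · rcases Sym2.eq_iff.mp h with ⟨h1, h2⟩ | ⟨h1, h2⟩
              · exact absurd (by rw [h1]; exact s'.2 : u ∈ S) huS
              · exact absurd (by rw [h2]; exact s'.2 : v ∈ S) hvS
            · rcases Sym2.eq_iff.mp h with ⟨h1, h2⟩ | ⟨h1, h2⟩
              · exact absurd (by rw [h1]; exact hnbB (m s').2 : u ∈ B) (st10_notB hbip huA)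
              · have hms' : m s' = ⟨v, hunb⟩ := Subtype.ext h2.symm
                apply m.injective
                rw [hms']
                exact (Subtype.ext hmsv).symm
            · rcases Sym2.eq_iff.mp h with ⟨h1, h2⟩ | ⟨h1, h2⟩
              · exact absurd (by rw [h1]; exact s'.2 : u ∈ S) huS
              · exact absurd (by rw [h2]; exact s'.2 : v ∈ S) hvS
            · rcases Sym2.eq_iff.mp h with ⟨h1, h2⟩ | ⟨h1, h2⟩
              · exact absurd (by rw [h1]; exact s'.2 : u ∈ S) huS
              · exact absurd (by rw [h2]; exact s'.2 : v ∈ S) hvS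
          rw [hs']
    intro e he
    induction e using Sym2.ind with
    | _ u v =>
      have huv : G.Adj u v := G.mem_edgeSet.mp he
      by_cases huA : u ∈ A
      · exact main u v huv huA
      · have huAB : u ∈ A ∪ B := by rw [hbip.1]; trivial
        have huB : u ∈ B := huAB.resolve_left huA
        have hvA : v ∈ A := st10_memA hbip huv.symm huB
        have h := main v u huv.symm hvA
        rw [Sym2.eq_swap]
        exact h
  · ext v
    simp only [Set.mem_setOf_eq]
    constructor
    · intro hv
      exact ⟨F ⟨v, hv⟩, ⟨⟨v, hv⟩, rfl⟩, hFc ⟨v, hv⟩⟩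
    · rintro ⟨t, ⟨s', rfl⟩, hc⟩
      rw [← hc, hFc]
      exact s'.2

end St10Helpers

/-- Let `G` be a cubic bipartite graph of order `n` with bipartition
`(A, B)` and let `S ⊆ A` have size `3n/8`.  Then `G` is `(S_{1,2}, S)`-decomposable iff the
bipartite subgraph of `G` induced between `S` and `N(A ∖ S)` has a perfect matching. -/
theorem statement10 {V : Type*} [Fintype V] (G : SimpleGraph V) [DecidableRel G.Adj]
    (n : ℕ) (hn : Fintype.card V = n) (hcubic : G.IsRegularOfDegree 3)
    (A B : Set V) (hbip : IsBipartitionOf G A B)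
    (S : Set V) (hSA : S ⊆ A) (hcard : 8 * S.ncard = 3 * n) :
    IsDSSDecomposable G 3 S ↔
      ∃ m : ↥S ≃ ↥(nbhd G (A \ S)), ∀ s : ↥S, G.Adj ↑s ↑(m s) := by
  have hAB : A.ncard = B.ncard := st10_cardAB hbip hcubic
  have hun : A.ncard + B.ncard = n := by
    rw [← Set.ncard_union_eq hbip.2.1 A.toFinite B.toFinite, hbip.1, Set.ncard_univ,
      Nat.card_eq_fintype_card, hn]
  have hSle : S.ncard ≤ A.ncard := Set.ncard_le_ncard hSA A.toFinite
  have hdiff : (A \ S).ncard = A.ncard - S.ncard := Set.ncard_diff hSA S.toFinite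
  have hS3 : 3 * (A \ S).ncard = S.ncard := by omega
  constructor
  · intro hdec
    have hb := st10_nbhd_card_le hcubic (A \ S)
    exact st10_forward hcubic hbip hSA (by omega) hdec
  · rintro ⟨m, hm⟩
    have h1 := Nat.card_coe_set_eq S
    have h2 := Nat.card_coe_set_eq (nbhd G (A \ S))
    have h3 := Nat.card_congr m
    exact st10_backward hcubic hbip hSA (st10_unique_pend hbip hcubic hSA hS3 (by omega)) m hm
end

section
/- Let r ≥ 2 and let G be an r-regular simple graph of order n which has an S_{1,r-1}-decomposition. Then 2(r+1) divides rn and the independence number satisfies α(G) ≥ rn/(2(r+1)). -/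
open SimpleGraph

variable {V : Type*}

section Aux

open DoubleStarCopy Finset

variable {r : ℕ} [DecidableEq V]

/-- distinctness facts from nodup -/
lemma nodup_facts {t : DoubleStarCopy V r} (h : t.vertList.Nodup) :
    t.center ≠ t.mid ∧ t.center ≠ t.pend ∧ (∀ i, t.center ≠ t.leaf i) ∧
    t.mid ≠ t.pend ∧ (∀ i, t.mid ≠ t.leaf i) ∧ (∀ i, t.pend ≠ t.leaf i) ∧
    Function.Injective t.leaf := by
  simp only [vertList, List.nodup_cons, List.mem_cons, List.mem_ofFn, List.nodup_ofFn,
    Set.mem_range, not_or, not_exists] at h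
  exact ⟨h.1.1, h.1.2.1, fun i e => h.1.2.2 i e.symm, h.2.1.1, fun i e => h.2.1.2 i e.symm,
    fun i e => h.2.2.1 i e.symm, h.2.2.2⟩

/-- the finset of edges of a copy -/
noncomputable def efin (t : DoubleStarCopy V r) : Finset (Sym2 V) :=
  insert s(t.center, t.mid) (insert s(t.mid, t.pend)
    (Finset.image (fun i => s(t.center, t.leaf i)) Finset.univ))

lemma mem_efin {t : DoubleStarCopy V r} {e : Sym2 V} : e ∈ efin t ↔ e ∈ t.edges := by
  simp [efin, edges, Set.mem_insert_iff, Set.mem_range]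

lemma card_efin (hr : 2 ≤ r) {t : DoubleStarCopy V r} (h : t.vertList.Nodup) :
    (efin t).card = r + 1 := by
  obtain ⟨h1, h2, h3, h4, h5, h6, h7⟩ := nodup_facts h
  rw [efin, Finset.card_insert_of_notMem, Finset.card_insert_of_notMem,
    Finset.card_image_of_injective, Finset.card_univ, Fintype.card_fin]
  · omega
  · intro i j hij
    rw [Sym2.eq_iff] at hij
    rcases hij with ⟨-, h'⟩ | ⟨h', -⟩
    · exact h7 h'
    · exact absurd h' (h3 j)
  · simp only [Finset.mem_image, Finset.mem_univ, true_and, not_exists, Sym2.eq_iff]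
    intro i
    have := h1; have := h5 i; have := h6 i
    tauto
  · simp only [Finset.mem_insert, Finset.mem_image, Finset.mem_univ, true_and, not_exists,
      not_or, Sym2.eq_iff]
    refine ⟨by tauto, fun i => ?_⟩
    have := h3 i; have := h5 i
    tauto

/-- finset of edges of t at its center -/
noncomputable def cfin (t : DoubleStarCopy V r) : Finset (Sym2 V) :=
  Finset.image (fun w => s(t.center, w)) (insert t.mid (Finset.image t.leaf Finset.univ))

lemma key [Fintype V] (hr : 2 ≤ r) {G : SimpleGraph V} [DecidableRel G.Adj]
    (hreg : G.IsRegularOfDegree r) {t : DoubleStarCopy V r} (ht : t.IsCopyIn G)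
    {e : Sym2 V} (he : e ∈ G.edgeSet) (hve : t.center ∈ e) : e ∈ t.edges := by
  obtain ⟨h1, h2, h3, h4, h5, h6, h7⟩ := nodup_facts ht.1
  have hsub : cfin t ⊆ G.incidenceFinset t.center := by
    intro x hx
    simp only [cfin, Finset.mem_image, Finset.mem_insert, Finset.mem_univ, true_and] at hx
    obtain ⟨w, hw, rfl⟩ := hx
    rw [SimpleGraph.mem_incidenceFinset]
    refine ⟨ht.2 ?_, Sym2.mem_mk_left _ _⟩
    rcases hw with rfl | ⟨i, -, rfl⟩
    · exact Or.inl rfl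
    · exact Or.inr (Or.inr ⟨i, rfl⟩)
  have hcard : (cfin t).card = r := by
    rw [cfin, Finset.card_image_of_injOn, Finset.card_insert_of_notMem,
      Finset.card_image_of_injective _ h7, Finset.card_univ, Fintype.card_fin]
    · omega
    · simp only [Finset.mem_image, Finset.mem_univ, true_and, not_exists]
      exact fun i e => h5 i e.symm
    · intro a ha b hb hab
      simp only [Finset.mem_coe, Finset.mem_insert, Finset.mem_image, Finset.mem_univ,
        true_and] at ha hb
      have hac : a ≠ t.center := by
        rcases ha with rfl | ⟨i, rfl⟩
        · exact fun e => h1 e.symm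
        · exact fun e => h3 i e.symm
      rw [Sym2.eq_iff] at hab
      rcases hab with ⟨-, h'⟩ | ⟨h', h''⟩
      · exact h'
      · exact absurd h'' hac
  have heq : cfin t = G.incidenceFinset t.center := by
    apply Finset.eq_of_subset_of_card_le hsub
    rw [SimpleGraph.card_incidenceFinset_eq_degree, hreg t.center, hcard]
  have : e ∈ cfin t := by
    rw [heq, SimpleGraph.mem_incidenceFinset]
    exact ⟨he, hve⟩
  simp only [cfin, Finset.mem_image, Finset.mem_insert, Finset.mem_univ, true_and] at this
  obtain ⟨w, hw, rfl⟩ := this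
  rcases hw with rfl | ⟨i, -, rfl⟩
  · exact Or.inl rfl
  · exact Or.inr (Or.inr ⟨i, rfl⟩)

end Aux

/-- Let `r ≥ 2` and let `G` be an `r`-regular graph of order `n` with an
`S_{1,r-1}`-decomposition.  Then `2(r+1) ∣ rn` and `α(G) ≥ rn/(2(r+1))`. -/
theorem statement11 {V : Type*} [Fintype V] (G : SimpleGraph V) [DecidableRel G.Adj]
    (n : ℕ) (hn : Fintype.card V = n) (r : ℕ) (hr : 2 ≤ r)
    (hreg : G.IsRegularOfDegree r) (hdec : HasDSDecomp G r) :
    2 * (r + 1) ∣ r * n ∧ r * n ≤ 2 * (r + 1) * indepNumber G := by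
  classical
  obtain ⟨𝒟, hmem, huniq⟩ := hdec
  haveI : Finite (DoubleStarCopy V r) :=
    Finite.of_injective (fun t => (t.center, t.mid, t.pend, t.leaf))
      (by rintro ⟨a, b, c, d⟩ ⟨a', b', c', d'⟩ h; simpa using h)
  set D : Finset (DoubleStarCopy V r) := (Set.toFinite 𝒟).toFinset with hD
  have hDmem : ∀ t, t ∈ D ↔ t ∈ 𝒟 := fun t => Set.Finite.mem_toFinset _
  -- an edge lies in two copies only if the copies coincide
  have huni : ∀ t1 ∈ 𝒟, ∀ t2 ∈ 𝒟, ∀ e ∈ G.edgeSet,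
      e ∈ t1.edges → e ∈ t2.edges → t1 = t2 := by
    intro t1 h1 t2 h2 e he he1 he2
    obtain ⟨t, -, hun⟩ := huniq e he
    rw [hun t1 ⟨h1, he1⟩, hun t2 ⟨h2, he2⟩]
  -- centers are injective
  have hcinj : ∀ t1 ∈ 𝒟, ∀ t2 ∈ 𝒟, t1.center = t2.center → t1 = t2 := by
    intro t1 h1 t2 h2 hc
    have he1 : s(t1.center, t1.mid) ∈ t1.edges := Or.inl rfl
    have heG : s(t1.center, t1.mid) ∈ G.edgeSet := (hmem t1 h1).2 he1
    refine huni t1 h1 t2 h2 _ heG he1 (key hr hreg (hmem t2 h2) heG ?_)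
    rw [← hc]; exact Sym2.mem_mk_left _ _
  -- the set of centers is independent
  set S : Finset V := D.image DoubleStarCopy.center with hS
  have hindep : IsIndepSetIn G (↑S : Set V) := by
    intro u hu v hv hadj
    simp only [hS, Finset.coe_image, Set.mem_image, Finset.mem_coe, hDmem] at hu hv
    obtain ⟨t1, h1, rfl⟩ := hu
    obtain ⟨t2, h2, rfl⟩ := hv
    have heG : s(t1.center, t2.center) ∈ G.edgeSet := hadj
    have he1 : s(t1.center, t2.center) ∈ t1.edges :=
      key hr hreg (hmem t1 h1) heG (Sym2.mem_mk_left _ _)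
    have he2 : s(t1.center, t2.center) ∈ t2.edges :=
      key hr hreg (hmem t2 h2) heG (Sym2.mem_mk_right _ _)
    exact hadj.ne (congrArg DoubleStarCopy.center (huni t1 h1 t2 h2 _ heG he1 he2))
  have hScard : S.card = D.card := by
    rw [hS]
    apply Finset.card_image_of_injOn
    intro t1 h1 t2 h2 hc
    exact hcinj t1 ((hDmem t1).1 h1) t2 ((hDmem t2).1 h2) hc
  -- edge count
  have hpart : G.edgeFinset = D.biUnion efin := by
    ext e
    simp only [SimpleGraph.mem_edgeFinset, Finset.mem_biUnion, mem_efin, hDmem]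
    constructor
    · intro he
      obtain ⟨t, ⟨ht, hte⟩, -⟩ := huniq e he
      exact ⟨t, ht, hte⟩
    · rintro ⟨t, ht, hte⟩
      exact (hmem t ht).2 hte
  have hdisj : ∀ t1 ∈ D, ∀ t2 ∈ D, t1 ≠ t2 → Disjoint (efin t1) (efin t2) := by
    intro t1 h1 t2 h2 hne
    rw [Finset.disjoint_left]
    intro e he1 he2
    rw [mem_efin] at he1 he2
    exact hne (huni t1 ((hDmem t1).1 h1) t2 ((hDmem t2).1 h2) e
      ((hmem t1 ((hDmem t1).1 h1)).2 he1) he1 he2)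
  have hcard : G.edgeFinset.card = D.card * (r + 1) := by
    rw [hpart, Finset.card_biUnion hdisj]
    rw [Finset.sum_congr rfl (fun t ht => card_efin hr (hmem t ((hDmem t).1 ht)).1)]
    simp [Finset.sum_const, mul_comm]
  have hsum : r * n = 2 * (r + 1) * D.card := by
    have := G.sum_degrees_eq_twice_card_edges
    rw [Finset.sum_congr rfl (fun v _ => hreg v), Finset.sum_const, Finset.card_univ, hn,
      smul_eq_mul, hcard] at this
    rw [mul_comm r n, this]; ring
  refine ⟨⟨D.card, hsum⟩, ?_⟩
  have hb : BddAbove {k | ∃ S : Set V, IsIndepSetIn G S ∧ S.ncard = k} := by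
    refine ⟨Fintype.card V, ?_⟩
    rintro k ⟨T, -, rfl⟩
    exact (Set.ncard_le_ncard (Set.subset_univ T) Set.finite_univ).trans
      (le_of_eq (by rw [Set.ncard_univ, Nat.card_eq_fintype_card]))
  have hα : D.card ≤ indepNumber G := by
    apply le_csSup hb
    exact ⟨(↑S : Set V), hindep, by rw [Set.ncard_coe_finset, hScard]⟩
  calc r * n = 2 * (r + 1) * D.card := hsum
    _ ≤ 2 * (r + 1) * indepNumber G := Nat.mul_le_mul_left _ hα
end

section
/- Let r ≥ 2 and let G be a bipartite r-regular simple graph of order 2n such that (r+1) divides n and the domination number satisfies γ(G) = 2n/(r+1). Then G has an S_{1,r-1}-decomposition. -/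
open SimpleGraph

variable {V : Type*}

lemma sum_filter_adj_comm {V : Type*} [Fintype V] (G : SimpleGraph V) [DecidableRel G.Adj]
    (S T : Finset V) :
    ∑ u ∈ S, (T.filter fun w => G.Adj u w).card
      = ∑ w ∈ T, (S.filter fun u => G.Adj u w).card := by
  simp only [Finset.card_filter]
  exact Finset.sum_comm

lemma count_adj_eq {V : Type*} [Fintype V] (G : SimpleGraph V) [DecidableRel G.Adj]
    (S T : Finset V) (k l : ℕ)
    (hS : ∀ s ∈ S, (T.filter fun w => G.Adj s w).card = k)
    (hT : ∀ t ∈ T, (S.filter fun u => G.Adj u t).card = l) :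
    S.card * k = T.card * l := by
  have h := sum_filter_adj_comm G S T
  rw [Finset.sum_congr rfl hS, Finset.sum_congr rfl hT, Finset.sum_const, Finset.sum_const,
    smul_eq_mul, smul_eq_mul] at h
  exact h


lemma key_lemma {V : Type*} [Fintype V] [DecidableEq V]
    (G : SimpleGraph V) [DecidableRel G.Adj]
    (r : ℕ) (hr : 2 ≤ r) (hreg : G.IsRegularOfDegree r)
    (A B : Set V) [DecidablePred (· ∈ A)] [DecidablePred (· ∈ B)]
    (hunion : A ∪ B = Set.univ) (hdisj : Disjoint A B)
    (hadj : ∀ ⦃u v⦄, G.Adj u v → (u ∈ A ↔ v ∈ B))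
    (D : Set V) [DecidablePred (· ∈ D)] (f : V → V)
    (hfD : ∀ v, f v ∈ D)
    (hfadj : ∀ v ∉ D, G.Adj v (f v))
    (hfid : ∀ v ∈ D, f v = v)
    (huniq : ∀ v d, d ∈ D → G.Adj v d → f v = d) :
    HasDSDecomp G r := by
  classical
  -- basic bipartition facts
  have hAB : ∀ x, x ∈ B ↔ x ∉ A := by
    intro x
    constructor
    · intro hB hA; exact (Set.disjoint_left.mp hdisj hA) hB
    · intro hA
      have : x ∈ A ∪ B := hunion ▸ Set.mem_univ x
      rcases this with h | h
      · exact absurd h hA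
      · exact h
  have hadj' : ∀ ⦃u v⦄, G.Adj u v → u ∈ A → v ∈ B := fun u v h hu => (hadj h).mp hu
  have hadj'' : ∀ ⦃u v⦄, G.Adj u v → u ∈ B → v ∈ A := by
    intro u v h hu
    by_contra hvA
    exact ((hAB u).mp hu) ((hadj h).mpr ((hAB v).mpr hvA))
  -- independence of D
  have hind : ∀ d ∈ D, ∀ d' ∈ D, ¬ G.Adj d d' := by
    intro d hd d' hd' hdd
    have h1 : f d = d' := huniq d d' hd' hdd
    have h2 : f d = d := hfid d hd
    exact G.ne_of_adj hdd (h2 ▸ h1)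
  -- unique dominator of vertices outside D
  have hfA : ∀ v ∈ B, v ∉ D → f v ∈ A := by
    intro v hv hvD
    exact hadj'' (hfadj v hvD) hv
  -- finsets
  set Af := Set.toFinset A with hAf
  set Bf := Set.toFinset B with hBf
  set Df := Set.toFinset D with hDf
  have hmemAf : ∀ x, x ∈ Af ↔ x ∈ A := fun x => Set.mem_toFinset
  have hmemBf : ∀ x, x ∈ Bf ↔ x ∈ B := fun x => Set.mem_toFinset
  have hmemDf : ∀ x, x ∈ Df ↔ x ∈ D := fun x => Set.mem_toFinset
  -- neighbours inside D
  have hnbD : ∀ u ∉ D, G.neighborFinset u ∩ Df = {f u} := by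
    intro u hu
    ext w
    simp only [Finset.mem_inter, mem_neighborFinset, Finset.mem_singleton, hmemDf]
    constructor
    · rintro ⟨h1, h2⟩; exact (huniq u w h2 h1).symm
    · rintro rfl; exact ⟨hfadj u hu, hfD u⟩
  have hcard_out : ∀ u ∉ D, (G.neighborFinset u \ Df).card = r - 1 := by
    intro u hu
    have h1 := Finset.card_sdiff_add_card_inter (G.neighborFinset u) Df
    rw [hnbD u hu, Finset.card_singleton] at h1
    have h2 : (G.neighborFinset u).card = r := hreg u
    omega
  have hnbDall : ∀ d ∈ D, G.neighborFinset d \ Df = G.neighborFinset d := by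
    intro d hd
    apply Finset.sdiff_eq_self_of_disjoint
    rw [Finset.disjoint_right]
    intro w hw hw2
    exact hind d hd w ((hmemDf w).mp hw) ((mem_neighborFinset G d w).mp hw2)
  -- cardinality facts
  have hcardAB : Af.card = Bf.card := by
    have h := count_adj_eq G Af Bf r r (fun u hu => ?_) (fun w hw => ?_)
    · exact Nat.eq_of_mul_eq_mul_right (by omega) h
    · -- all neighbours of u ∈ A lie in B
      have : Bf.filter (fun w => G.Adj u w) = G.neighborFinset u := by
        ext w
        simp only [Finset.mem_filter, mem_neighborFinset, hmemBf]
        exact ⟨fun h => h.2, fun h => ⟨hadj' h ((hmemAf u).mp hu), h⟩⟩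
      rw [this]; exact hreg u
    · have : Af.filter (fun v => G.Adj v w) = G.neighborFinset w := by
        ext v
        simp only [Finset.mem_filter, mem_neighborFinset, hmemAf]
        exact ⟨fun h => h.2.symm, fun h => ⟨hadj'' h ((hmemBf w).mp hw), h.symm⟩⟩
      rw [this]; exact hreg w
  have hcount1 : (Af ∩ Df).card * r = (Bf \ Df).card * 1 := by
    refine count_adj_eq G _ _ r 1 ?_ ?_
    · intro d hd
      rw [Finset.mem_inter, hmemAf, hmemDf] at hd
      have : (Bf \ Df).filter (fun w => G.Adj d w) = G.neighborFinset d := by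
        ext w
        simp only [Finset.mem_filter, Finset.mem_sdiff, mem_neighborFinset, hmemBf, hmemDf]
        constructor
        · exact fun h => h.2
        · intro h
          exact ⟨⟨hadj' h hd.1, fun hw => hind d hd.2 w hw h⟩, h⟩
      rw [this]; exact hreg d
    · intro w hw
      rw [Finset.mem_sdiff, hmemBf, hmemDf] at hw
      have : (Af ∩ Df).filter (fun v => G.Adj v w) = {f w} := by
        ext v
        simp only [Finset.mem_filter, Finset.mem_inter, hmemAf, hmemDf, Finset.mem_singleton]
        constructor
        · rintro ⟨⟨_, hvD⟩, hvw⟩; exact (huniq w v hvD hvw.symm).symm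
        · rintro rfl
          exact ⟨⟨hfA w hw.1 hw.2, hfD w⟩, (hfadj w hw.2).symm⟩
      rw [this]; exact Finset.card_singleton _
  have hcount2 : (Bf ∩ Df).card * r = (Af \ Df).card * 1 := by
    refine count_adj_eq G _ _ r 1 ?_ ?_
    · intro d hd
      rw [Finset.mem_inter, hmemBf, hmemDf] at hd
      have : (Af \ Df).filter (fun w => G.Adj d w) = G.neighborFinset d := by
        ext w
        simp only [Finset.mem_filter, Finset.mem_sdiff, mem_neighborFinset, hmemAf, hmemDf]
        constructor
        · exact fun h => h.2
        · intro h
          exact ⟨⟨hadj'' h hd.1, fun hw => hind d hd.2 w hw h⟩, h⟩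
      rw [this]; exact hreg d
    · intro w hw
      rw [Finset.mem_sdiff, hmemAf, hmemDf] at hw
      have : (Bf ∩ Df).filter (fun v => G.Adj v w) = {f w} := by
        ext v
        simp only [Finset.mem_filter, Finset.mem_inter, hmemBf, hmemDf, Finset.mem_singleton]
        constructor
        · rintro ⟨⟨_, hvD⟩, hvw⟩; exact (huniq w v hvD hvw.symm).symm
        · rintro rfl
          refine ⟨⟨?_, hfD w⟩, (hfadj w hw.2).symm⟩
          exact hadj' (hfadj w hw.2) hw.1
      rw [this]; exact Finset.card_singleton _
  have hsplitA := Finset.card_sdiff_add_card_inter Af Df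
  have hsplitB := Finset.card_sdiff_add_card_inter Bf Df
  rw [mul_one] at hcount1 hcount2
  have hcardnD : (Af \ Df).card = (Bf \ Df).card := by
    have e1 : (Af ∩ Df).card * r + (Bf ∩ Df).card = Bf.card := by
      rw [hcount1]; omega
    have e2 : (Bf ∩ Df).card * r + (Af ∩ Df).card = Bf.card := by
      rw [hcount2]; omega
    have hab : (Af ∩ Df).card = (Bf ∩ Df).card := by
      have e1' : ((Af ∩ Df).card : ℤ) * r + (Bf ∩ Df).card = (Bf.card : ℤ) := by
        exact_mod_cast e1
      have e2' : ((Bf ∩ Df).card : ℤ) * r + (Af ∩ Df).card = (Bf.card : ℤ) := by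
        exact_mod_cast e2
      have h3 : (((Af ∩ Df).card : ℤ) - (Bf ∩ Df).card) * ((r : ℤ) - 1) = 0 := by
        linear_combination e1' - e2'
      have hr' : (2 : ℤ) ≤ r := by exact_mod_cast hr
      rcases mul_eq_zero.mp h3 with h | h
      · have : ((Af ∩ Df).card : ℤ) = (Bf ∩ Df).card := by linarith
        exact_mod_cast this
      · linarith
    rw [← hcount1, ← hcount2, hab]
  -- Hall's theorem: a perfect matching between A \ D and B \ D
  have hall : ∀ s : Finset {x // x ∈ Af \ Df},
      s.card ≤ (s.biUnion fun u => G.neighborFinset (u : V) \ Df).card := by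
    intro s
    set S0 := s.image (Subtype.val) with hS0
    set T0 := s.biUnion fun u => G.neighborFinset (u : V) \ Df with hT0
    have hS0card : S0.card = s.card := Finset.card_image_of_injective s Subtype.val_injective
    have hmem0 : ∀ u : {x // x ∈ Af \ Df}, (u : V) ∈ A ∧ (u : V) ∉ D := by
      intro u
      have := u.2
      rw [Finset.mem_sdiff, hmemAf, hmemDf] at this
      exact this
    have hsub1 : ∀ u ∈ S0, (r - 1) ≤ (T0.filter fun w => G.Adj u w).card := by
      intro u hu
      rw [hS0, Finset.mem_image] at hu
      obtain ⟨u0, hu0, rfl⟩ := hu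
      have hsub : G.neighborFinset (u0 : V) \ Df ⊆ T0.filter fun w => G.Adj (u0 : V) w := by
        intro w hw
        rw [Finset.mem_filter]
        refine ⟨Finset.mem_biUnion.mpr ⟨u0, hu0, hw⟩, ?_⟩
        exact (mem_neighborFinset G _ w).mp (Finset.mem_sdiff.mp hw).1
      calc r - 1 = (G.neighborFinset (u0 : V) \ Df).card := (hcard_out _ (hmem0 u0).2).symm
      _ ≤ _ := Finset.card_le_card hsub
    have hsub2 : ∀ w ∈ T0, (S0.filter fun u => G.Adj u w).card ≤ r - 1 := by
      intro w hw
      rw [hT0, Finset.mem_biUnion] at hw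
      obtain ⟨u0, hu0, hw⟩ := hw
      have hwD : w ∉ D := by
        have := (Finset.mem_sdiff.mp hw).2; rwa [hmemDf] at this
      have hsub : S0.filter (fun u => G.Adj u w) ⊆ G.neighborFinset w \ Df := by
        intro v hv
        rw [Finset.mem_filter] at hv
        rw [Finset.mem_sdiff, mem_neighborFinset]
        obtain ⟨hv1, hv2⟩ := hv
        rw [hS0, Finset.mem_image] at hv1
        obtain ⟨v0, _, rfl⟩ := hv1
        refine ⟨hv2.symm, ?_⟩
        rw [hmemDf]; exact (hmem0 v0).2
      calc (S0.filter fun u => G.Adj u w).card ≤ _ := Finset.card_le_card hsub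
      _ = r - 1 := hcard_out _ hwD
    have hchain : S0.card * (r - 1) ≤ T0.card * (r - 1) := by
      calc S0.card * (r - 1) = ∑ _u ∈ S0, (r - 1) := by rw [Finset.sum_const, smul_eq_mul]
      _ ≤ ∑ u ∈ S0, (T0.filter fun w => G.Adj u w).card := Finset.sum_le_sum hsub1
      _ = ∑ w ∈ T0, (S0.filter fun u => G.Adj u w).card := sum_filter_adj_comm G S0 T0
      _ ≤ ∑ _w ∈ T0, (r - 1) := Finset.sum_le_sum hsub2
      _ = T0.card * (r - 1) := by rw [Finset.sum_const, smul_eq_mul]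
    rw [← hS0card]
    exact Nat.le_of_mul_le_mul_right hchain (by omega)
  obtain ⟨g, hginj, hgmem⟩ := (Finset.all_card_le_biUnion_card_iff_existsInjective'
    (fun u : {x // x ∈ Af \ Df} => G.neighborFinset (u : V) \ Df)).mp hall
  have hmemι : ∀ u : {x // x ∈ Af \ Df}, (u : V) ∈ A ∧ (u : V) ∉ D := by
    intro u
    have := u.2
    rw [Finset.mem_sdiff, hmemAf, hmemDf] at this
    exact this
  have hgadj : ∀ u : {x // x ∈ Af \ Df}, G.Adj (u : V) (g u) := fun u =>
    (mem_neighborFinset G _ _).mp (Finset.mem_sdiff.mp (hgmem u)).1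
  have hgD : ∀ u : {x // x ∈ Af \ Df}, g u ∉ D := fun u => by
    have := (Finset.mem_sdiff.mp (hgmem u)).2; rwa [hmemDf] at this
  have hgB : ∀ u : {x // x ∈ Af \ Df}, g u ∈ B := fun u => hadj' (hgadj u) (hmemι u).1
  have hgsurj : ∀ w ∈ Bf \ Df, ∃ u : {x // x ∈ Af \ Df}, g u = w := by
    have himg : (Finset.univ.image g) = Bf \ Df := by
      apply Finset.eq_of_subset_of_card_le
      · intro w hw
        rw [Finset.mem_image] at hw
        obtain ⟨u, _, rfl⟩ := hw
        rw [Finset.mem_sdiff, hmemBf, hmemDf]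
        exact ⟨hgB u, hgD u⟩
      · rw [Finset.card_image_of_injective _ hginj, Finset.card_univ, Fintype.card_coe]
        omega
    intro w hw
    rw [← himg, Finset.mem_image] at hw
    obtain ⟨u, _, h⟩ := hw
    exact ⟨u, h⟩
  -- the leaves of each copy
  have hcard_erase : ∀ u : {x // x ∈ Af \ Df},
      ((G.neighborFinset (u : V)).erase (g u)).card = r - 1 := by
    intro u
    have h2 : (G.neighborFinset (u : V)).card = r := hreg (u : V)
    rw [Finset.card_erase_of_mem ((mem_neighborFinset G _ _).mpr (hgadj u)), h2]
  have hleaf_ex : ∀ u : {x // x ∈ Af \ Df}, ∃ lf : Fin (r - 1) → V,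
      Function.Injective lf ∧
      (∀ i, lf i ∈ (G.neighborFinset (u : V)).erase (g u)) ∧
      ∀ w ∈ (G.neighborFinset (u : V)).erase (g u), ∃ i, lf i = w := by
    intro u
    let e := Finset.equivFinOfCardEq (hcard_erase u)
    refine ⟨fun i => (e.symm i : V), ?_, ?_, ?_⟩
    · intro i j hij
      exact e.symm.injective (Subtype.ext hij)
    · intro i; exact (e.symm i).2
    · intro w hw
      exact ⟨e ⟨w, hw⟩, by simp⟩
  choose lf hlfinj hlfmem hlfsurj using hleaf_ex
  have hlfadj : ∀ (u : {x // x ∈ Af \ Df}) i, G.Adj (u : V) (lf u i) := by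
    intro u i
    have := hlfmem u i
    rw [Finset.mem_erase, mem_neighborFinset] at this
    exact this.2
  have hlfne : ∀ (u : {x // x ∈ Af \ Df}) i, lf u i ≠ g u := by
    intro u i
    have := hlfmem u i
    rw [Finset.mem_erase] at this
    exact this.1
  have hlfB : ∀ (u : {x // x ∈ Af \ Df}) i, lf u i ∈ B := fun u i =>
    hadj' (hlfadj u i) (hmemι u).1
  -- the copies
  set mk : {x // x ∈ Af \ Df} → DoubleStarCopy V r :=
    fun u => ⟨(u : V), g u, f (g u), lf u⟩ with hmk
  have hpD : ∀ u : {x // x ∈ Af \ Df}, f (g u) ∈ D := fun u => hfD _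
  have hpA : ∀ u : {x // x ∈ Af \ Df}, f (g u) ∈ A := fun u => hfA _ (hgB u) (hgD u)
  have hpadj : ∀ u : {x // x ∈ Af \ Df}, G.Adj (g u) (f (g u)) := fun u => hfadj _ (hgD u)
  have hmemedges : ∀ (u : {x // x ∈ Af \ Df}) (e : Sym2 V), e ∈ (mk u).edges ↔
      (e = s((u : V), g u) ∨ e = s(g u, f (g u)) ∨ ∃ i, s((u : V), lf u i) = e) :=
    fun u e => Iff.rfl
  -- the main existence-and-uniqueness claim
  have main : ∀ x y, G.Adj x y → x ∈ A →
      ∃! t, t ∈ Set.range mk ∧ s(x, y) ∈ t.edges := by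
    intro x y hxy hxA
    have hyB : y ∈ B := hadj' hxy hxA
    by_cases hxD : x ∈ D
    · -- x is the pendant end: the copy is determined by y = g u
      have hyD : y ∉ D := fun h => hind x hxD y h hxy
      have hyBnD : y ∈ Bf \ Df := by
        rw [Finset.mem_sdiff, hmemBf, hmemDf]; exact ⟨hyB, hyD⟩
      obtain ⟨u, hu⟩ := hgsurj y hyBnD
      have hfy : f y = x := huniq y x hxD hxy.symm
      refine ⟨mk u, ⟨⟨u, rfl⟩, ?_⟩, ?_⟩
      · rw [hmemedges]
        right; left
        rw [hu, hfy, Sym2.eq_swap]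
      · rintro t ⟨⟨u', rfl⟩, het⟩
        rw [hmemedges] at het
        rcases het with h | h | ⟨i, h⟩
        · rcases Sym2.eq_iff.mp h with ⟨h1, _⟩ | ⟨h1, _⟩
          · exact absurd (h1 ▸ hxD) (hmemι u').2
          · exact absurd (h1 ▸ hxD) (hgD u')
        · rcases Sym2.eq_iff.mp h with ⟨h1, _⟩ | ⟨_, h2⟩
          · exact absurd (h1 ▸ hxD) (hgD u')
          · have : u' = u := hginj (by rw [hu, ← h2])
            rw [this]
        · rcases Sym2.eq_iff.mp h with ⟨h1, _⟩ | ⟨_, h2⟩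
          · exact absurd (h1.symm ▸ hxD) (hmemι u').2
          · exact absurd hxA ((hAB x).mp (h2 ▸ hlfB u' i))
    · -- x is the centre of the copy
      have hxAD : x ∈ Af \ Df := by
        rw [Finset.mem_sdiff, hmemAf, hmemDf]; exact ⟨hxA, hxD⟩
      refine ⟨mk ⟨x, hxAD⟩, ⟨⟨⟨x, hxAD⟩, rfl⟩, ?_⟩, ?_⟩
      · rw [hmemedges]
        by_cases hyg : y = g ⟨x, hxAD⟩
        · left; rw [hyg]
        · right; right
          have hy : y ∈ (G.neighborFinset x).erase (g ⟨x, hxAD⟩) :=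
            Finset.mem_erase.mpr ⟨hyg, (mem_neighborFinset G _ _).mpr hxy⟩
          obtain ⟨i, hi⟩ := hlfsurj ⟨x, hxAD⟩ y hy
          exact ⟨i, by rw [hi]⟩
      · rintro t ⟨⟨u', rfl⟩, het⟩
        rw [hmemedges] at het
        have hBnotx : ∀ z, z ∈ B → z ≠ x := fun z hz he =>
          (Set.disjoint_left.mp hdisj hxA) (he ▸ hz)
        rcases het with h | h | ⟨i, h⟩
        · rcases Sym2.eq_iff.mp h with ⟨h1, _⟩ | ⟨h1, _⟩
          · congr 1
            exact Subtype.ext h1.symm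
          · exact absurd h1.symm (hBnotx _ (hgB u'))
        · rcases Sym2.eq_iff.mp h with ⟨h1, _⟩ | ⟨h1, _⟩
          · exact absurd h1.symm (hBnotx _ (hgB u'))
          · exact absurd (h1 ▸ hxD) (fun _ => hxD (h1 ▸ hpD u'))
        · rcases Sym2.eq_iff.mp h with ⟨h1, _⟩ | ⟨_, h2⟩
          · congr 1
            exact Subtype.ext h1
          · exact absurd h2 (hBnotx _ (hlfB u' i))
  refine ⟨Set.range mk, ?_, ?_⟩
  · -- every copy is genuine
    rintro t ⟨u, rfl⟩
    constructor
    · -- vertices are distinct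
      show ((u : V) :: g u :: f (g u) :: List.ofFn (lf u)).Nodup
      have hBne : ∀ z, z ∈ B → z ≠ (u : V) := fun z hz he =>
        (Set.disjoint_left.mp hdisj (hmemι u).1) (he ▸ hz)
      have hBnep : ∀ z, z ∈ B → z ≠ f (g u) := fun z hz he =>
        (Set.disjoint_left.mp hdisj (hpA u)) (he ▸ hz)
      simp only [List.nodup_cons, List.mem_cons, List.mem_ofFn, Set.mem_range]
      refine ⟨?_, ?_, ?_, List.nodup_ofFn.mpr (hlfinj u)⟩
      · push_neg
        refine ⟨fun h => hBne _ (hgB u) h.symm, fun h => (hmemι u).2 (h ▸ hpD u), ?_⟩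
        intro i h
        exact hBne _ (hlfB u i) h
      · push_neg
        refine ⟨fun h => (hgD u) (h ▸ hpD u), fun i h => (hlfne u i) h⟩
      · push_neg
        intro i h
        exact hBnep _ (hlfB u i) h
    · -- edges are edges of G
      intro e he
      rw [hmemedges] at he
      rcases he with rfl | rfl | ⟨i, rfl⟩
      · exact (G.mem_edgeSet).mpr (hgadj u)
      · exact (G.mem_edgeSet).mpr (hpadj u)
      · exact (G.mem_edgeSet).mpr (hlfadj u i)
  · -- every edge lies in a unique copy
    intro e
    refine Sym2.ind (fun x y he => ?_) e
    rw [mem_edgeSet] at he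
    have hx : x ∈ A ∪ B := by rw [hunion]; trivial
    rcases hx with hx | hx
    · exact main x y he hx
    · have hyA : y ∈ A := hadj'' he hx
      rw [Sym2.eq_swap]
      exact main y x he.symm hyA

/-- Let `r ≥ 2` and let `G` be a bipartite `r`-regular graph of order
`2n` with `(r+1) ∣ n` and `γ(G) = 2n/(r+1)`.  Then `G` has an
`S_{1,r-1}`-decomposition. -/
theorem statement13 {V : Type*} [Fintype V] (G : SimpleGraph V) [DecidableRel G.Adj]
    (n : ℕ) (hn : Fintype.card V = 2 * n) (r : ℕ) (hr : 2 ≤ r)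
    (hreg : G.IsRegularOfDegree r)
    (hbip : ∃ A B : Set V, IsBipartitionOf G A B)
    (hdvd : (r + 1) ∣ n) (hdom : (r + 1) * domNumber G = 2 * n) :
    HasDSDecomp G r := by
  classical
  obtain ⟨A, B, hunion, hdisj, hadjAB⟩ := hbip
  have hne : ({k | ∃ D : Set V, IsDomSet G D ∧ D.ncard = k}).Nonempty :=
    ⟨(Set.univ : Set V).ncard, Set.univ, fun v hv => absurd (Set.mem_univ v) hv, rfl⟩
  obtain ⟨D, hDdom, hDcard⟩ := Nat.sInf_mem hne
  have hDcard' : D.ncard = domNumber G := hDcard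
  have hDsize : (r + 1) * D.toFinset.card = Fintype.card V := by
    rw [hn, ← hdom, ← hDcard', Set.ncard_eq_toFinset_card']
  have hdomchoice : ∀ v : V, ∃ w, w ∈ D ∧ (v ∈ D → w = v) ∧ (v ∉ D → G.Adj v w) := by
    intro v
    by_cases hv : v ∈ D
    · exact ⟨v, hv, fun _ => rfl, fun h => absurd hv h⟩
    · obtain ⟨d, hd, hadjd⟩ := hDdom v hv
      exact ⟨d, hd, fun h => absurd h hv, fun _ => hadjd⟩
  choose f hfD hfid0 hfadj0 using hdomchoice
  have hfiber_sub : ∀ d, Finset.univ.filter (fun v => f v = d) ⊆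
      insert d (G.neighborFinset d) := by
    intro d v hv
    rw [Finset.mem_filter] at hv
    rw [Finset.mem_insert, mem_neighborFinset]
    by_cases hvD : v ∈ D
    · left; rw [← hv.2, hfid0 v hvD]
    · right; exact (hv.2 ▸ hfadj0 v hvD).symm
  have hinscard : ∀ d, (insert d (G.neighborFinset d)).card = r + 1 := by
    intro d
    have h1 : (G.neighborFinset d).card = r := hreg d
    rw [Finset.card_insert_of_notMem (by simp), h1]
  have hsum : ∑ d ∈ D.toFinset, (Finset.univ.filter (fun v => f v = d)).card
      = Fintype.card V := by
    rw [← Finset.card_univ]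
    exact (Finset.card_eq_sum_card_fiberwise (fun v _ => Set.mem_toFinset.mpr (hfD v))).symm
  have hle : ∀ d ∈ D.toFinset, (Finset.univ.filter (fun v => f v = d)).card ≤ r + 1 := by
    intro d _
    calc (Finset.univ.filter (fun v => f v = d)).card
        ≤ (insert d (G.neighborFinset d)).card := Finset.card_le_card (hfiber_sub d)
    _ = r + 1 := hinscard d
  have hfibers : ∀ d ∈ D.toFinset, (Finset.univ.filter (fun v => f v = d)).card = r + 1 := by
    have heq : ∑ d ∈ D.toFinset, (Finset.univ.filter (fun v => f v = d)).card
        = ∑ _d ∈ D.toFinset, (r + 1) := by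
      rw [hsum, Finset.sum_const, smul_eq_mul, ← hDsize]; ring
    intro d hd
    exact (Finset.sum_eq_sum_iff_of_le hle).mp heq d hd
  have hfiber_eq : ∀ d ∈ D, Finset.univ.filter (fun v => f v = d)
      = insert d (G.neighborFinset d) := by
    intro d hd
    apply Finset.eq_of_subset_of_card_le (hfiber_sub d)
    rw [hinscard d, hfibers d (Set.mem_toFinset.mpr hd)]
  have huniq : ∀ v d, d ∈ D → G.Adj v d → f v = d := by
    intro v d hd hvd
    have hmem : v ∈ Finset.univ.filter (fun v => f v = d) := by
      rw [hfiber_eq d hd, Finset.mem_insert, mem_neighborFinset]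
      right; exact hvd.symm
    rw [Finset.mem_filter] at hmem
    exact hmem.2
  exact key_lemma G r hr hreg A B hunion hdisj hadjAB D f hfD hfadj0 hfid0 huniq
end
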